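/- Let G ⊆ ℝ² be convex, f : G → ℝ² monotone, and suppose f(G) is not contained in the union of a line and a single point, and f(G) has empty interior. Then f(G) contains four convex independent points. -/

import Mathlib

/-- A line in ℝ² through `p` with direction `v`. -/
def lineThrough (p v : ℝ × ℝ) : Set (ℝ × ℝ) := {x | ∃ t : ℝ, x = p + t • v}

/-- A set is convex independent if none of its points lies in the convex hull of the
others. -/
def ConvexIndep (s : Set (ℝ × ℝ)) : Prop := ∀ x ∈ s, x ∉ convexHull ℝ (s \ {x})

namespace S11

def det2 (u v : ℝ × ℝ) : ℝ := u.1 * v.2 - u.2 * v.1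

lemma det2_affine (u o p q : ℝ × ℝ) (t : ℝ) :
    det2 u (p + t • (q - p) - o) = (1 - t) * det2 u (p - o) + t * det2 u (q - o) := by
  simp only [det2, Prod.fst_add, Prod.snd_add, Prod.fst_sub, Prod.snd_sub, Prod.smul_fst,
    Prod.smul_snd, smul_eq_mul]
  ring

lemma det2_param (u e o : ℝ × ℝ) (t : ℝ) : det2 u (o + t • e - o) = t * det2 u e := by
  simp only [det2, Prod.fst_add, Prod.snd_add, Prod.fst_sub, Prod.snd_sub, Prod.smul_fst,
    Prod.smul_snd, smul_eq_mul]
  ring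

lemma det2_shift (e X O : ℝ × ℝ) (p : ℝ) : det2 e (X - (O + p • e)) = det2 e (X - O) := by
  simp only [det2, Prod.fst_add, Prod.snd_add, Prod.fst_sub, Prod.snd_sub, Prod.smul_fst,
    Prod.smul_snd, smul_eq_mul]
  ring

lemma det2_diff (u X Y O : ℝ × ℝ) : det2 u (Y - X) = det2 u (Y - O) - det2 u (X - O) := by
  simp only [det2, Prod.fst_sub, Prod.snd_sub]; ring

lemma det2_self (u : ℝ × ℝ) : det2 u u = 0 := by simp only [det2]; ring

lemma det2_zero_sub (u A : ℝ × ℝ) : det2 u (A - A) = 0 := by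
  simp only [det2, Prod.fst_sub, Prod.snd_sub]; ring

lemma det2_swap (u v : ℝ × ℝ) : det2 u v = - det2 v u := by
  simp only [det2]; ring

lemma det2_smul_left (t : ℝ) (u v : ℝ × ℝ) : det2 (t • u) v = t * det2 u v := by
  simp only [det2, Prod.smul_fst, Prod.smul_snd, smul_eq_mul]; ring

lemma det2_smul_right (t : ℝ) (u v : ℝ × ℝ) : det2 u (t • v) = t * det2 u v := by
  simp only [det2, Prod.smul_fst, Prod.smul_snd, smul_eq_mul]; ring

lemma det2_combo (u O Y P : ℝ × ℝ) (l : ℝ) :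
    det2 u ((1 - l) • O + l • Y - P) = (1 - l) * det2 u (O - P) + l * det2 u (Y - P) := by
  simp only [det2, Prod.fst_add, Prod.snd_add, Prod.fst_sub, Prod.snd_sub, Prod.smul_fst,
    Prod.smul_snd, smul_eq_mul]
  ring

lemma det2_zero_left (v : ℝ × ℝ) : det2 0 v = 0 := by
  simp [det2]

lemma det2_zero_right (u : ℝ × ℝ) : det2 u 0 = 0 := by
  simp [det2]

lemma rep_of_det2 {e : ℝ × ℝ} (he : e ≠ 0) {z o : ℝ × ℝ} (h : det2 e (z - o) = 0) :
    ∃ t : ℝ, z = o + t • e := by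
  rcases eq_or_ne e.1 0 with h1 | h1
  · have h2 : e.2 ≠ 0 := by
      intro h2; exact he (Prod.ext h1 h2)
    refine ⟨(z.2 - o.2) / e.2, ?_⟩
    have hz1 : z.1 - o.1 = 0 := by
      simp only [det2, Prod.fst_sub, Prod.snd_sub, h1, zero_mul] at h
      have h' : e.2 * (z.1 - o.1) = 0 := by linarith
      rcases mul_eq_zero.mp h' with h'' | h''
      · exact absurd h'' h2
      · exact h''
    apply Prod.ext
    · simp only [Prod.fst_add, Prod.smul_fst, smul_eq_mul, h1, mul_zero]
      linarith
    · simp only [Prod.snd_add, Prod.smul_snd, smul_eq_mul]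
      field_simp
      ring
  · refine ⟨(z.1 - o.1) / e.1, ?_⟩
    apply Prod.ext
    · simp only [Prod.fst_add, Prod.smul_fst, smul_eq_mul]
      field_simp
      ring
    · simp only [Prod.snd_add, Prod.smul_snd, smul_eq_mul]
      simp only [det2, Prod.fst_sub, Prod.snd_sub] at h
      field_simp
      nlinarith [h]

lemma seg_dest {x p q : ℝ × ℝ} (h : x ∈ segment ℝ p q) :
    ∃ t : ℝ, 0 ≤ t ∧ t ≤ 1 ∧ x = p + t • (q - p) := by
  rw [segment_eq_image'] at h
  obtain ⟨t, ht, hx⟩ := h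
  exact ⟨t, ht.1, ht.2, hx.symm⟩

lemma seg_intro {p q : ℝ × ℝ} {t : ℝ} (h0 : 0 ≤ t) (h1 : t ≤ 1) :
    p + t • (q - p) ∈ segment ℝ p q := by
  rw [segment_eq_image']
  exact ⟨t, ⟨h0, h1⟩, rfl⟩

lemma hull3 {z p q r : ℝ × ℝ} (h : z ∈ convexHull ℝ {p, q, r}) :
    ∃ y ∈ segment ℝ q r, z ∈ segment ℝ p y := by
  rw [show ({p, q, r} : Set (ℝ × ℝ)) = insert p {q, r} from rfl,
    convexHull_insert ⟨q, by simp⟩, mem_convexJoin] at h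
  obtain ⟨x, hx, y, hy, hz⟩ := h
  rw [Set.mem_singleton_iff] at hx
  rw [convexHull_pair] at hy
  exact ⟨y, hy, hx ▸ hz⟩

lemma smul_cancel {e : ℝ × ℝ} (he : e ≠ 0) {a b : ℝ} (h : a • e = b • e) : a = b := by
  have h' : (a - b) • e = 0 := by rw [sub_smul, h, sub_self]
  rcases smul_eq_zero.mp h' with h'' | h''
  · linarith [sub_eq_zero.mp (by linarith : a - b = 0)]
  · exact absurd h'' he

lemma smul_ne_zero' {e : ℝ × ℝ} (he : e ≠ 0) {a : ℝ} (ha : a ≠ 0) : a • e ≠ 0 := by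
  intro h
  rcases smul_eq_zero.mp h with h' | h'
  · exact ha h'
  · exact he h'

lemma combo_pos {a b t : ℝ} (ha : 0 < a) (hb : 0 < b) (ht0 : 0 ≤ t) (ht1 : t ≤ 1) :
    0 < (1 - t) * a + t * b := by
  rcases eq_or_lt_of_le ht0 with h | h
  · rw [← h]; simp only [mul_zero, zero_mul, sub_zero, one_mul, add_zero]; linarith
  · have h1 : 0 < t * b := mul_pos h hb
    have h2 : 0 ≤ (1 - t) * a := mul_nonneg (by linarith) ha.le
    linarith

lemma combo_ne {a b t : ℝ} (hab : 0 < a * b) (ht0 : 0 ≤ t) (ht1 : t ≤ 1) :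
    (1 - t) * a + t * b ≠ 0 := by
  rcases lt_or_ge 0 a with ha | ha
  · have hb : 0 < b := by nlinarith
    exact ne_of_gt (combo_pos ha hb ht0 ht1)
  · have ha' : a < 0 := by
      rcases lt_or_eq_of_le ha with h | h
      · exact h
      · exfalso; rw [h] at hab; simp at hab
    have hb : b < 0 := by nlinarith
    have h3 : 0 < (1 - t) * (-a) + t * (-b) := combo_pos (by linarith) (by linarith) ht0 ht1
    intro h4
    nlinarith

/-- goal predicate -/
def Good (S : Set (ℝ × ℝ)) : Prop :=
  ∃ a b c d : ℝ × ℝ, a ∈ S ∧ b ∈ S ∧ c ∈ S ∧ d ∈ S ∧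
    ({a, b, c, d} : Set (ℝ × ℝ)).ncard = 4 ∧ ConvexIndep {a, b, c, d}

lemma indep4 {S : Set (ℝ × ℝ)} {A B C D : ℝ × ℝ} (hA : A ∈ S) (hB : B ∈ S) (hC : C ∈ S)
    (hD : D ∈ S)
    (nA : A ∉ convexHull ℝ {B, C, D}) (nB : B ∉ convexHull ℝ {A, C, D})
    (nC : C ∉ convexHull ℝ {A, B, D}) (nD : D ∉ convexHull ℝ {A, B, C}) : Good S := by
  have hAB : A ≠ B := by rintro rfl; exact nA (subset_convexHull ℝ _ (by simp))
  have hAC : A ≠ C := by rintro rfl; exact nA (subset_convexHull ℝ _ (by simp))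
  have hAD : A ≠ D := by rintro rfl; exact nA (subset_convexHull ℝ _ (by simp))
  have hBC : B ≠ C := by rintro rfl; exact nB (subset_convexHull ℝ _ (by simp))
  have hBD : B ≠ D := by rintro rfl; exact nB (subset_convexHull ℝ _ (by simp))
  have hCD : C ≠ D := by rintro rfl; exact nC (subset_convexHull ℝ _ (by simp))
  refine ⟨A, B, C, D, hA, hB, hC, hD, ?_, ?_⟩
  · rw [Set.ncard_insert_of_notMem (by simp [hAB, hAC, hAD]) (Set.toFinite _),
      Set.ncard_insert_of_notMem (by simp [hBC, hBD]) (Set.toFinite _),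
      Set.ncard_insert_of_notMem (by simp [hCD]) (Set.toFinite _), Set.ncard_singleton]
  · intro x hx
    have hxc : x = A ∨ x = B ∨ x = C ∨ x = D := by simpa using hx
    rcases hxc with rfl | rfl | rfl | rfl
    · have hs : ({x, B, C, D} : Set (ℝ × ℝ)) \ {x} = {B, C, D} := by
        ext y
        simp only [Set.mem_diff, Set.mem_insert_iff, Set.mem_singleton_iff]
        constructor
        · rintro ⟨h1, h2⟩; tauto
        · rintro (rfl | rfl | rfl) <;> simp_all [hAB.symm, hAC.symm, hAD.symm]
      rw [hs]; exact nA
    · have hs : ({A, x, C, D} : Set (ℝ × ℝ)) \ {x} = {A, C, D} := by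
        ext y
        simp only [Set.mem_diff, Set.mem_insert_iff, Set.mem_singleton_iff]
        constructor
        · rintro ⟨h1, h2⟩; tauto
        · rintro (rfl | rfl | rfl) <;> simp_all [hAB, hBC.symm, hBD.symm]
      rw [hs]; exact nB
    · have hs : ({A, B, x, D} : Set (ℝ × ℝ)) \ {x} = {A, B, D} := by
        ext y
        simp only [Set.mem_diff, Set.mem_insert_iff, Set.mem_singleton_iff]
        constructor
        · rintro ⟨h1, h2⟩; tauto
        · rintro (rfl | rfl | rfl) <;> simp_all [hAC, hBC, hCD.symm]
      rw [hs]; exact nC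
    · have hs : ({A, B, C, x} : Set (ℝ × ℝ)) \ {x} = {A, B, C} := by
        ext y
        simp only [Set.mem_diff, Set.mem_insert_iff, Set.mem_singleton_iff]
        constructor
        · rintro ⟨h1, h2⟩; tauto
        · rintro (rfl | rfl | rfl) <;> simp_all [hAD, hBD, hCD]
      rw [hs]; exact nD

lemma quadX {S : Set (ℝ × ℝ)} {A B C D E : ℝ × ℝ} (hA : A ∈ S) (hB : B ∈ S) (hC : C ∈ S)
    (hD : D ∈ S) (hEA : E ≠ A) (hEB : E ≠ B) (hE1 : E ∈ segment ℝ A B) (hE2 : E ∈ segment ℝ C D)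
    (hsign : det2 (B - A) (C - A) * det2 (B - A) (D - A) < 0) : Good S := by
  set u := B - A with hu
  obtain ⟨s, hs0, hs1, hEr⟩ := seg_dest hE1
  obtain ⟨m, hm0, hm1, hEr2⟩ := seg_dest hE2
  have hABne : A ≠ B := by
    rintro rfl
    apply hEA
    rw [hEr]; simp
  have hune : u ≠ 0 := sub_ne_zero.mpr (Ne.symm hABne)
  have hsne0 : s ≠ 0 := by
    rintro rfl; apply hEA; rw [hEr]; simp
  have hsne1 : s ≠ 1 := by
    rintro rfl; apply hEB; rw [hEr]; module
  have hspos : 0 < s := lt_of_le_of_ne hs0 (Ne.symm hsne0)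
  have hslt : s < 1 := lt_of_le_of_ne hs1 hsne1
  have hpsiE : det2 u (E - A) = 0 := by
    rw [hEr]
    rw [show A + s • (B - A) - A = s • u by rw [hu]; module]
    rw [det2_smul_right, det2_self, mul_zero]
  have hcomb : (1 - m) * det2 u (C - A) + m * det2 u (D - A) = 0 := by
    have h2 : det2 u (E - A) = (1 - m) * det2 u (C - A) + m * det2 u (D - A) := by
      rw [hEr2]; exact det2_affine u A C D m
    rw [← h2, hpsiE]
  have hCDne : det2 u (C - A) ≠ det2 u (D - A) := by
    intro h; rw [h] at hsign; nlinarith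
  -- C not in hull {A,B,D}
  have nC : C ∉ convexHull ℝ {A, B, D} := by
    intro hmem
    have hset : ({A, B, D} : Set (ℝ × ℝ)) = {D, A, B} := by
      ext y; simp only [Set.mem_insert_iff, Set.mem_singleton_iff]; tauto
    rw [hset] at hmem
    obtain ⟨y, hy, hCy⟩ := hull3 hmem
    obtain ⟨t, ht0, ht1, hyr⟩ := seg_dest hy
    obtain ⟨v, hv0, hv1, hCr⟩ := seg_dest hCy
    have hgy : det2 u (y - A) = 0 := by
      rw [hyr]
      rw [show A + t • (B - A) - A = t • u by rw [hu]; module]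
      rw [det2_smul_right, det2_self, mul_zero]
    have hgC : det2 u (C - A) = (1 - v) * det2 u (D - A) + v * det2 u (y - A) := by
      rw [hCr]; exact det2_affine u A D y v
    rw [hgy, mul_zero, add_zero] at hgC
    have key : det2 u (C - A) * det2 u (D - A)
        = (1 - v) * (det2 u (D - A) * det2 u (D - A)) := by rw [hgC]; ring
    have h2 : 0 ≤ (1 - v) * (det2 u (D - A) * det2 u (D - A)) :=
      mul_nonneg (by linarith) (mul_self_nonneg _)
    linarith
  have nD : D ∉ convexHull ℝ {A, B, C} := by
    intro hmem
    have hset : ({A, B, C} : Set (ℝ × ℝ)) = {C, A, B} := by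
      ext y; simp only [Set.mem_insert_iff, Set.mem_singleton_iff]; tauto
    rw [hset] at hmem
    obtain ⟨y, hy, hDy⟩ := hull3 hmem
    obtain ⟨t, ht0, ht1, hyr⟩ := seg_dest hy
    obtain ⟨v, hv0, hv1, hDr⟩ := seg_dest hDy
    have hgy : det2 u (y - A) = 0 := by
      rw [hyr]
      rw [show A + t • (B - A) - A = t • u by rw [hu]; module]
      rw [det2_smul_right, det2_self, mul_zero]
    have hgD : det2 u (D - A) = (1 - v) * det2 u (C - A) + v * det2 u (y - A) := by
      rw [hDr]; exact det2_affine u A C y v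
    rw [hgy, mul_zero, add_zero] at hgD
    have key : det2 u (C - A) * det2 u (D - A)
        = (1 - v) * (det2 u (C - A) * det2 u (C - A)) := by rw [hgD]; ring
    have h2 : 0 ≤ (1 - v) * (det2 u (C - A) * det2 u (C - A)) :=
      mul_nonneg (by linarith) (mul_self_nonneg _)
    linarith
  have nA : A ∉ convexHull ℝ {B, C, D} := by
    intro hmem
    obtain ⟨y, hy, hAy⟩ := hull3 hmem
    obtain ⟨n, hn0, hn1, hyr⟩ := seg_dest hy
    obtain ⟨t, ht0, ht1, hAr⟩ := seg_dest hAy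
    have hgy : det2 u (y - A) = (1 - n) * det2 u (C - A) + n * det2 u (D - A) := by
      rw [hyr]; exact det2_affine u A C D n
    have h0 : (0:ℝ) = (1 - t) * det2 u (B - A) + t * det2 u (y - A) := by
      have := det2_affine u A B y t
      rw [← hAr] at this
      rw [← this, det2_zero_sub]
    rw [← hu, det2_self] at h0
    have h0' : t * det2 u (y - A) = 0 := by linarith
    rcases mul_eq_zero.mp h0' with ht' | hy'
    · -- t = 0 : A = B
      apply hABne
      rw [ht', zero_smul, add_zero] at hAr
      exact hAr
    · -- y = E
      have hnm : n = m := by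
        rw [hgy] at hy'
        have : (n - m) * (det2 u (D - A) - det2 u (C - A)) = 0 := by linarith
        rcases mul_eq_zero.mp this with h' | h'
        · linarith
        · exfalso; apply hCDne; linarith
      have hyE : y = E := by rw [hyr, hEr2, hnm]
      -- A ∈ [B, E],  E - B = (s-1) • u
      rw [hyE] at hAr
      have hEB' : E - B = (s - 1) • u := by rw [hEr, hu]; module
      have hAB' : A - B = t • ((s - 1) • u) := by
        rw [← hEB']
        rw [hAr]; module
      have : (-1 : ℝ) • u = (t * (s - 1)) • u := by
        rw [smul_smul] at hAB'
        rw [← hAB']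
        rw [hu]; module
      have heq := smul_cancel hune this
      nlinarith
  have nB : B ∉ convexHull ℝ {A, C, D} := by
    intro hmem
    obtain ⟨y, hy, hBy⟩ := hull3 hmem
    obtain ⟨n, hn0, hn1, hyr⟩ := seg_dest hy
    obtain ⟨t, ht0, ht1, hBr⟩ := seg_dest hBy
    have hgy : det2 u (y - A) = (1 - n) * det2 u (C - A) + n * det2 u (D - A) := by
      rw [hyr]; exact det2_affine u A C D n
    have h0 : det2 u (B - A) = (1 - t) * det2 u (A - A) + t * det2 u (y - A) := by
      have := det2_affine u A A y t
      rw [← hBr] at this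
      exact this
    rw [← hu, det2_self, det2_zero_sub, mul_zero, zero_add] at h0
    have h0' : t * det2 u (y - A) = 0 := by linarith [det2_self u]
    rcases mul_eq_zero.mp h0' with ht' | hy'
    · apply hABne
      rw [ht', zero_smul, add_zero] at hBr
      exact hBr.symm
    · have hnm : n = m := by
        rw [hgy] at hy'
        have : (n - m) * (det2 u (D - A) - det2 u (C - A)) = 0 := by linarith
        rcases mul_eq_zero.mp this with h' | h'
        · linarith
        · exfalso; apply hCDne; linarith
      have hyE : y = E := by rw [hyr, hEr2, hnm]
      rw [hyE] at hBr
      have hEA' : E - A = s • u := by rw [hEr, hu]; module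
      have hBA' : B - A = t • (s • u) := by
        rw [← hEA', hBr]; module
      have : (1 : ℝ) • u = (t * s) • u := by
        rw [smul_smul] at hBA'
        rw [← hBA', hu]; module
      have heq := smul_cancel hune this
      nlinarith
  exact indep4 hA hB hC hD nA nB nC nD

lemma twoRay {S : Set (ℝ × ℝ)} (U e d : ℝ × ℝ) (hind : det2 e d ≠ 0) {s1 s2 a b : ℝ}
    (hs : 0 < s1 * s2) (hsne : s1 ≠ s2) (hab : 0 < a * b) (habne : a ≠ b)
    (h1 : U + s1 • e ∈ S) (h2 : U + s2 • e ∈ S) (h3 : U + a • d ∈ S) (h4 : U + b • d ∈ S) :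
    Good S := by
  have he : e ≠ 0 := by rintro rfl; rw [det2_zero_left] at hind; exact hind rfl
  have hd : d ≠ 0 := by
    rintro rfl; rw [det2_swap, det2_zero_left] at hind; simp at hind
  set P1 := U + s1 • e with hP1
  set P2 := U + s2 • e with hP2
  set X1 := U + a • d with hX1
  set X2 := U + b • d with hX2
  have hgP : ∀ t : ℝ, det2 e (U + t • e - U) = 0 := by
    intro t; rw [det2_param, det2_self, mul_zero]
  have hgX : ∀ t : ℝ, det2 e (U + t • d - U) = t * det2 e d := by
    intro t; rw [det2_param]
  have hcP : ∀ t : ℝ, det2 d (U + t • e - U) = - (t * det2 e d) := by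
    intro t; rw [det2_param, det2_swap]; ring
  have hcX : ∀ t : ℝ, det2 d (U + t • d - U) = 0 := by
    intro t; rw [det2_param, det2_self, mul_zero]
  -- generic kill for P-type points
  have killP : ∀ t1 t2 : ℝ, t1 ≠ t2 →
      U + t1 • e ∉ convexHull ℝ {U + t2 • e, X1, X2} := by
    intro t1 t2 htne hmem
    obtain ⟨y, hy, hPy⟩ := hull3 hmem
    obtain ⟨v, hv0, hv1, hyr⟩ := seg_dest hy
    obtain ⟨t, ht0, ht1, hPr⟩ := seg_dest hPy
    have hgy : det2 e (y - U) = ((1 - v) * a + v * b) * det2 e d := by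
      have h' : det2 e (y - U) = (1 - v) * det2 e (X1 - U) + v * det2 e (X2 - U) := by
        rw [hyr]; exact det2_affine e U X1 X2 v
      rw [h', hX1, hX2, hgX, hgX]; ring
    have hgyne : det2 e (y - U) ≠ 0 := by
      rw [hgy]
      exact mul_ne_zero (combo_ne hab hv0 hv1) hind
    have h0 : det2 e (U + t1 • e - U) = (1 - t) * det2 e (U + t2 • e - U) + t * det2 e (y - U) := by
      have h00 := det2_affine e U (U + t2 • e) y t
      rw [← hPr] at h00
      exact h00
    rw [hgP, hgP, mul_zero, zero_add] at h0
    have ht' : t = 0 := by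
      rcases mul_eq_zero.mp h0.symm with h' | h'
      · exact h'
      · exact absurd h' hgyne
    rw [ht', zero_smul, add_zero] at hPr
    have : t1 • e = t2 • e := by
      have := hPr
      rwa [add_right_inj] at this
    exact htne (smul_cancel he this)
  have killX : ∀ t1 t2 : ℝ, t1 ≠ t2 →
      U + t1 • d ∉ convexHull ℝ {U + t2 • d, P1, P2} := by
    intro t1 t2 htne hmem
    obtain ⟨y, hy, hXy⟩ := hull3 hmem
    obtain ⟨v, hv0, hv1, hyr⟩ := seg_dest hy
    obtain ⟨t, ht0, ht1, hXr⟩ := seg_dest hXy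
    have hgy : det2 d (y - U) = -(((1 - v) * s1 + v * s2) * det2 e d) := by
      have h' : det2 d (y - U) = (1 - v) * det2 d (P1 - U) + v * det2 d (P2 - U) := by
        rw [hyr]; exact det2_affine d U P1 P2 v
      rw [h', hP1, hP2, hcP, hcP]; ring
    have hgyne : det2 d (y - U) ≠ 0 := by
      rw [hgy]
      intro h'
      exact (mul_ne_zero (combo_ne hs hv0 hv1) hind) (by linarith)
    have h0 : det2 d (U + t1 • d - U) = (1 - t) * det2 d (U + t2 • d - U) + t * det2 d (y - U) := by
      have h00 := det2_affine d U (U + t2 • d) y t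
      rw [← hXr] at h00
      exact h00
    rw [hcX, hcX, mul_zero, zero_add] at h0
    have ht' : t = 0 := by
      rcases mul_eq_zero.mp h0.symm with h' | h'
      · exact h'
      · exact absurd h' hgyne
    rw [ht', zero_smul, add_zero] at hXr
    have : t1 • d = t2 • d := by
      have := hXr
      rwa [add_right_inj] at this
    exact htne (smul_cancel hd this)
  have nA : P1 ∉ convexHull ℝ {P2, X1, X2} := killP s1 s2 hsne
  have nB : P2 ∉ convexHull ℝ {P1, X1, X2} := killP s2 s1 (Ne.symm hsne)
  have nC : X1 ∉ convexHull ℝ {P1, P2, X2} := by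
    intro hmem
    have hset : ({P1, P2, X2} : Set (ℝ × ℝ)) = {X2, P1, P2} := by
      ext y; simp only [Set.mem_insert_iff, Set.mem_singleton_iff]; tauto
    rw [hset] at hmem
    exact killX a b habne hmem
  have nD : X2 ∉ convexHull ℝ {P1, P2, X1} := by
    intro hmem
    have hset : ({P1, P2, X1} : Set (ℝ × ℝ)) = {X1, P1, P2} := by
      ext y; simp only [Set.mem_insert_iff, Set.mem_singleton_iff]; tauto
    rw [hset] at hmem
    exact killX b a (Ne.symm habne) hmem
  exact indep4 h1 h2 h3 h4 nA nB nC nD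

lemma trap {S : Set (ℝ × ℝ)} (O e : ℝ × ℝ) (he : e ≠ 0) {p r : ℝ} (hpr : p ≠ r) {X Y : ℝ × ℝ}
    (hgX : det2 e (X - O) ≠ 0) (hgXY : det2 e (X - O) = det2 e (Y - O)) (hXY : X ≠ Y)
    (h1 : O + p • e ∈ S) (h2 : O + r • e ∈ S) (h3 : X ∈ S) (h4 : Y ∈ S) : Good S := by
  set P1 := O + p • e with hP1
  set P2 := O + r • e with hP2
  have hgP : ∀ t : ℝ, det2 e (O + t • e - O) = 0 := by
    intro t; rw [det2_param, det2_self, mul_zero]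
  have killP : ∀ t1 t2 : ℝ, t1 ≠ t2 →
      O + t1 • e ∉ convexHull ℝ {O + t2 • e, X, Y} := by
    intro t1 t2 htne hmem
    obtain ⟨y, hy, hPy⟩ := hull3 hmem
    obtain ⟨v, hv0, hv1, hyr⟩ := seg_dest hy
    obtain ⟨t, ht0, ht1, hPr⟩ := seg_dest hPy
    have hgy : det2 e (y - O) = det2 e (X - O) := by
      have h' : det2 e (y - O) = (1 - v) * det2 e (X - O) + v * det2 e (Y - O) := by
        rw [hyr]; exact det2_affine e O X Y v
      rw [h', ← hgXY]; ring
    have h0 : det2 e (O + t1 • e - O) = (1 - t) * det2 e (O + t2 • e - O) + t * det2 e (y - O) := by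
      have h00 := det2_affine e O (O + t2 • e) y t
      rw [← hPr] at h00
      exact h00
    rw [hgP, hgP, mul_zero, zero_add] at h0
    have ht' : t = 0 := by
      rcases mul_eq_zero.mp h0.symm with h' | h'
      · exact h'
      · rw [hgy] at h'; exact absurd h' hgX
    rw [ht', zero_smul, add_zero] at hPr
    have : t1 • e = t2 • e := by
      have := hPr
      rwa [add_right_inj] at this
    exact htne (smul_cancel he this)
  have killX : ∀ Z W : ℝ × ℝ, Z ≠ W → det2 e (Z - O) ≠ 0 → det2 e (Z - O) = det2 e (W - O) →
      Z ∉ convexHull ℝ {W, P1, P2} := by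
    intro Z W hZW hgZ hgZW hmem
    obtain ⟨y, hy, hZy⟩ := hull3 hmem
    obtain ⟨v, hv0, hv1, hyr⟩ := seg_dest hy
    obtain ⟨t, ht0, ht1, hZr⟩ := seg_dest hZy
    have hgy : det2 e (y - O) = 0 := by
      have h' : det2 e (y - O) = (1 - v) * det2 e (P1 - O) + v * det2 e (P2 - O) := by
        rw [hyr]; exact det2_affine e O P1 P2 v
      rw [h', hP1, hP2, hgP, hgP]; ring
    have h0 : det2 e (Z - O) = (1 - t) * det2 e (W - O) + t * det2 e (y - O) := by
      have h00 := det2_affine e O W y t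
      rw [← hZr] at h00
      exact h00
    rw [hgy, mul_zero, add_zero, ← hgZW] at h0
    have ht1' : t = 0 := by
      have h' : t * det2 e (Z - O) = 0 := by linarith
      rcases mul_eq_zero.mp h' with h'' | h''
      · exact h''
      · exact absurd h'' hgZ
    rw [ht1', zero_smul, add_zero] at hZr
    exact hZW hZr
  have nA : P1 ∉ convexHull ℝ {P2, X, Y} := killP p r hpr
  have nB : P2 ∉ convexHull ℝ {P1, X, Y} := killP r p (Ne.symm hpr)
  have nC : X ∉ convexHull ℝ {P1, P2, Y} := by
    intro hmem
    have hset : ({P1, P2, Y} : Set (ℝ × ℝ)) = {Y, P1, P2} := by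
      ext y; simp only [Set.mem_insert_iff, Set.mem_singleton_iff]; tauto
    rw [hset] at hmem
    exact killX X Y hXY hgX hgXY hmem
  have nD : Y ∉ convexHull ℝ {P1, P2, X} := by
    intro hmem
    have hset : ({P1, P2, X} : Set (ℝ × ℝ)) = {X, P1, P2} := by
      ext y; simp only [Set.mem_insert_iff, Set.mem_singleton_iff]; tauto
    rw [hset] at hmem
    exact killX Y X (Ne.symm hXY) (by rw [← hgXY]; exact hgX) (by rw [← hgXY]) hmem
  exact indep4 h1 h2 h3 h4 nA nB nC nD

def Cross (S : Set (ℝ × ℝ)) (A B C D : ℝ × ℝ) : Prop :=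
  ∃ s ∈ S, s ∈ segment ℝ A B ∧ s ∈ segment ℝ C D

def Inc (S : Set (ℝ × ℝ)) (A B C D : ℝ × ℝ) : Prop :=
  (∃ s ∈ S, s ∈ segment ℝ C D ∧ A ∈ segment ℝ B s) ∧
  (∃ s ∈ S, s ∈ segment ℝ B D ∧ A ∈ segment ℝ C s) ∧
  (∃ s ∈ S, s ∈ segment ℝ B C ∧ A ∈ segment ℝ D s)

def HP (S : Set (ℝ × ℝ)) : Prop := ∀ A B C D : ℝ × ℝ, A ∈ S → B ∈ S → C ∈ S → D ∈ S →
  Cross S A B C D ∨ Cross S A C B D ∨ Cross S A D B C ∨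
  Inc S A B C D ∨ Inc S B A C D ∨ Inc S C A B D ∨ Inc S D A B C

def NP (S : Set (ℝ × ℝ)) : Prop :=
  ∀ p w : ℝ × ℝ, w ≠ 0 → ∀ q : ℝ × ℝ, ∃ s ∈ S, (∀ t : ℝ, s ≠ p + t • w) ∧ s ≠ q

set_option maxHeartbeats 1600000 in
lemma LF {S : Set (ℝ × ℝ)} (hHP : HP S) (O e w : ℝ × ℝ) (hind : det2 e w ≠ 0)
    {p r a b : ℝ} (hp : p < 0) (hr : 0 < r) (ha : 0 < a) (hab : a < b)
    (hO : O ∈ S) (hP : O + p • e ∈ S) (hR : O + r • e ∈ S)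
    (hX : O + a • w ∈ S) (hY : O + b • w ∈ S) : Good S := by
  have hb0 : 0 < b := lt_trans ha hab
  have he : e ≠ 0 := by rintro rfl; rw [det2_zero_left] at hind; exact hind rfl
  have hw : w ≠ 0 := by
    rintro rfl; rw [det2_swap, det2_zero_left] at hind; simp at hind
  set D0 := det2 e w with hD0
  set P := O + p • e with hPd
  set R := O + r • e with hRd
  set X := O + a • w with hXd
  set Y := O + b • w with hYd
  have hgP : det2 e (P - O) = 0 := by rw [hPd, det2_param, det2_self, mul_zero]
  have hgR : det2 e (R - O) = 0 := by rw [hRd, det2_param, det2_self, mul_zero]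
  have hgX : det2 e (X - O) = a * D0 := by rw [hXd, det2_param, hD0]
  have hgY : det2 e (Y - O) = b * D0 := by rw [hYd, det2_param, hD0]
  have hwe : det2 w e = -D0 := by rw [hD0, det2_swap]
  have hcP : det2 w (P - O) = -(p * D0) := by rw [hPd, det2_param, hwe]; ring
  have hcR : det2 w (R - O) = -(r * D0) := by rw [hRd, det2_param, hwe]; ring
  have hcX : det2 w (X - O) = 0 := by rw [hXd, det2_param, det2_self, mul_zero]
  have hcY : det2 w (Y - O) = 0 := by rw [hYd, det2_param, det2_self, mul_zero]
  have hXY : X ≠ Y := by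
    rw [hXd, hYd]
    intro h
    rw [add_right_inj] at h
    have := smul_cancel hw h
    linarith
  have hPR : P ≠ R := by
    rw [hPd, hRd]
    intro h
    rw [add_right_inj] at h
    have := smul_cancel he h
    linarith
  rcases hHP P R X Y hP hR hX hY with hbr | hbr | hbr | hbr | hbr | hbr | hbr
  · -- Cross S P R X Y
    obtain ⟨s, hsS, hs1, hs2⟩ := hbr
    obtain ⟨t1, ht10, ht11, hsr1⟩ := seg_dest hs1
    obtain ⟨t2, ht20, ht21, hsr2⟩ := seg_dest hs2
    have hgs0 : det2 e (s - O) = 0 := by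
      have h00 := det2_affine e O P R t1
      rw [← hsr1] at h00
      rw [h00, hgP, hgR]; ring
    have hgs1 : det2 e (s - O) = ((1 - t2) * a + t2 * b) * D0 := by
      have h00 := det2_affine e O X Y t2
      rw [← hsr2] at h00
      rw [h00, hgX, hgY]; ring
    have hc : ((1 - t2) * a + t2 * b) * D0 ≠ 0 :=
      mul_ne_zero (ne_of_gt (combo_pos ha hb0 ht20 ht21)) hind
    rw [hgs0] at hgs1
    exact absurd hgs1.symm hc
  · -- Cross S P X R Y
    obtain ⟨s, hsS, hs1, hs2⟩ := hbr
    obtain ⟨t1, ht10, ht11, hsr1⟩ := seg_dest hs1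
    obtain ⟨t2, ht20, ht21, hsr2⟩ := seg_dest hs2
    have h1 : det2 w (s - O) = (1 - t1) * (-(p * D0)) := by
      have h00 := det2_affine w O P X t1
      rw [← hsr1] at h00
      rw [h00, hcP, hcX]; ring
    have h2 : det2 w (s - O) = (1 - t2) * (-(r * D0)) := by
      have h00 := det2_affine w O R Y t2
      rw [← hsr2] at h00
      rw [h00, hcR, hcY]; ring
    have heq : (1 - t1) * (-p) * D0 = (1 - t2) * (-r) * D0 := by
      rw [show (1 - t1) * (-p) * D0 = (1 - t1) * (-(p * D0)) by ring, ← h1, h2]; ring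
    have heq2 : (1 - t1) * (-p) = (1 - t2) * (-r) := mul_right_cancel₀ hind heq
    have ht1' : t1 = 1 := by nlinarith
    have ht2' : t2 = 1 := by nlinarith
    exfalso
    apply hXY
    have hsX : s = X := by rw [hsr1, ht1']; module
    have hsY : s = Y := by rw [hsr2, ht2']; module
    rw [← hsX, ← hsY]
  · -- Cross S P Y R X
    obtain ⟨s, hsS, hs1, hs2⟩ := hbr
    obtain ⟨t1, ht10, ht11, hsr1⟩ := seg_dest hs1
    obtain ⟨t2, ht20, ht21, hsr2⟩ := seg_dest hs2
    have h1 : det2 w (s - O) = (1 - t1) * (-(p * D0)) := by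
      have h00 := det2_affine w O P Y t1
      rw [← hsr1] at h00
      rw [h00, hcP, hcY]; ring
    have h2 : det2 w (s - O) = (1 - t2) * (-(r * D0)) := by
      have h00 := det2_affine w O R X t2
      rw [← hsr2] at h00
      rw [h00, hcR, hcX]; ring
    have heq : (1 - t1) * (-p) * D0 = (1 - t2) * (-r) * D0 := by
      rw [show (1 - t1) * (-p) * D0 = (1 - t1) * (-(p * D0)) by ring, ← h1, h2]; ring
    have heq2 : (1 - t1) * (-p) = (1 - t2) * (-r) := mul_right_cancel₀ hind heq
    have ht1' : t1 = 1 := by nlinarith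
    have ht2' : t2 = 1 := by nlinarith
    exfalso
    apply hXY
    have hsX : s = X := by rw [hsr2, ht2']; module
    have hsY : s = Y := by rw [hsr1, ht1']; module
    rw [← hsX, ← hsY]
  · -- Inc S P R X Y : s ∈ [X,Y], P ∈ [R,s]
    obtain ⟨⟨s, hsS, hs1, hs2⟩, -, -⟩ := hbr
    obtain ⟨t2, ht20, ht21, hsr2⟩ := seg_dest hs1
    obtain ⟨t, ht0, ht1, hPr⟩ := seg_dest hs2
    have hgs : det2 e (s - O) = ((1 - t2) * a + t2 * b) * D0 := by
      have h00 := det2_affine e O X Y t2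
      rw [← hsr2] at h00
      rw [h00, hgX, hgY]; ring
    have hgsne : det2 e (s - O) ≠ 0 := by
      rw [hgs]
      exact mul_ne_zero (ne_of_gt (combo_pos ha hb0 ht20 ht21)) hind
    have h00 := det2_affine e O R s t
    rw [← hPr] at h00
    rw [hgP, hgR] at h00
    have ht' : t = 0 := by
      rcases mul_eq_zero.mp (by linarith : t * det2 e (s - O) = 0) with h' | h'
      · exact h'
      · exact absurd h' hgsne
    exfalso
    apply hPR
    rw [hPr, ht', zero_smul, add_zero]
  · -- Inc S R P X Y : s ∈ [X,Y], R ∈ [P,s]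
    obtain ⟨⟨s, hsS, hs1, hs2⟩, -, -⟩ := hbr
    obtain ⟨t2, ht20, ht21, hsr2⟩ := seg_dest hs1
    obtain ⟨t, ht0, ht1, hRr⟩ := seg_dest hs2
    have hgs : det2 e (s - O) = ((1 - t2) * a + t2 * b) * D0 := by
      have h00 := det2_affine e O X Y t2
      rw [← hsr2] at h00
      rw [h00, hgX, hgY]; ring
    have hgsne : det2 e (s - O) ≠ 0 := by
      rw [hgs]
      exact mul_ne_zero (ne_of_gt (combo_pos ha hb0 ht20 ht21)) hind
    have h00 := det2_affine e O P s t
    rw [← hRr] at h00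
    rw [hgP, hgR] at h00
    have ht' : t = 0 := by
      rcases mul_eq_zero.mp (by linarith : t * det2 e (s - O) = 0) with h' | h'
      · exact h'
      · exact absurd h' hgsne
    exfalso
    apply hPR
    rw [hRr, ht', zero_smul, add_zero]
  · -- Inc S X P R Y : key branch. s1 ∈ [R,Y], X ∈ [P,s1]
    obtain ⟨⟨s1, hs1S, hs1seg, hXseg⟩, -, -⟩ := hbr
    obtain ⟨sg, hsg0, hsg1, hs1r⟩ := seg_dest hs1seg
    obtain ⟨tt, htt0, htt1, hXr2⟩ := seg_dest hXseg
    have hcs1 : det2 w (s1 - O) = (1 - sg) * (-(r * D0)) := by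
      have h00 := det2_affine w O R Y sg
      rw [← hs1r] at h00
      rw [h00, hcR, hcY]; ring
    have hstar : (1 - tt) * (-(p * D0)) + tt * ((1 - sg) * (-(r * D0))) = 0 := by
      have h00 := det2_affine w O P s1 tt
      rw [← hXr2] at h00
      rw [hcX, hcP, hcs1] at h00
      linarith
    have hstar2 : ((1 - tt) * (-p) + tt * ((1 - sg) * (-r))) * D0 = 0 * D0 := by
      rw [zero_mul]; rw [show ((1 - tt) * (-p) + tt * ((1 - sg) * (-r))) * D0
        = (1 - tt) * (-(p * D0)) + tt * ((1 - sg) * (-(r * D0))) by ring, hstar]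
    have hstar3 : (1 - tt) * (-p) + tt * ((1 - sg) * (-r)) = 0 := mul_right_cancel₀ hind hstar2
    have hsgne1 : sg ≠ 1 := by
      intro h
      rw [h] at hstar3
      have htt1' : tt = 1 := by nlinarith
      apply hXY
      have : s1 = Y := by rw [hs1r, h]; module
      rw [hXr2, htt1', this]; module
    have hcs1ne : det2 w (s1 - O) ≠ 0 := by
      rw [hcs1]
      have h1 : (1 - sg) * r ≠ 0 :=
        mul_ne_zero (by intro h'; apply hsgne1; linarith) (ne_of_gt hr)
      intro h'
      apply h1
      have : (1 - sg) * r * D0 = 0 := by linarith [h']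
      exact mul_left_cancel₀ hind (by rw [show D0 * ((1-sg)*r) = (1-sg)*r*D0 by ring, this, mul_zero])
    have hXneP : X ≠ P := by
      intro h'
      rw [h'] at hcX
      rw [hcP] at hcX
      have : p * D0 = 0 := by linarith
      rcases mul_eq_zero.mp this with h'' | h''
      · linarith
      · exact hind h''
    have hXnes1 : X ≠ s1 := by
      intro h'
      rw [h'] at hcX
      exact hcs1ne hcX
    -- X ∈ segment O Y
    set l := a / b with hl
    have hl0 : 0 < l := div_pos ha hb0
    have hl1 : l < 1 := (div_lt_one hb0).mpr hab
    have hlb : l * b = a := div_mul_cancel₀ a (ne_of_gt hb0)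
    have hXOY : X ∈ segment ℝ O Y := by
      have hmem := seg_intro (p := O) (q := Y) (le_of_lt hl0) (le_of_lt hl1)
      have hvec : O + l • (Y - O) = X := by
        rw [hYd, hXd, show O + b • w - O = b • w by module, smul_smul, hlb]
      rwa [hvec] at hmem
    -- psi functional
    set u1 := s1 - P with hu1
    have hpsiX : det2 u1 (X - P) = 0 := by
      rw [show X - P = tt • (s1 - P) by rw [hXr2]; module, hu1, det2_smul_right, det2_self,
        mul_zero]
    have hcombo : (1 - l) • O + l • Y = X := by
      rw [hYd, hXd, show (1 - l) • O + l • (O + b • w) = O + (l * b) • w by module, hlb]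
    have hpsicomb : 0 = (1 - l) * det2 u1 (O - P) + l * det2 u1 (Y - P) := by
      rw [← det2_combo u1 O Y P l, hcombo, hpsiX]
    have hpsiYne : det2 u1 (Y - P) ≠ 0 := by
      intro h0
      have hdiff : det2 u1 (Y - X) = 0 := by
        rw [det2_diff u1 X Y P, h0, hpsiX, sub_zero]
      rw [show Y - X = (b - a) • w by rw [hXd, hYd]; module, det2_smul_right] at hdiff
      have hba : det2 u1 w = 0 := by
        rcases mul_eq_zero.mp hdiff with h' | h'
        · exfalso; linarith [sub_pos.mpr hab]
        · exact h'
      have hws1 : det2 w u1 = 0 := by rw [det2_swap] at hba; linarith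
      have : det2 w (s1 - P) = 0 := by rw [← hu1]; exact hws1
      rw [det2_diff w P s1 O, hcs1, hcP] at this
      have h5 : ((1 - sg) * (-r) + p) * D0 = 0 := by linarith
      rcases mul_eq_zero.mp h5 with h' | h'
      · nlinarith
      · exact hind h'
    have hsign : det2 u1 (O - P) * det2 u1 (Y - P) < 0 := by
      have hpos : 0 < det2 u1 (Y - P) * det2 u1 (Y - P) := mul_self_pos.mpr hpsiYne
      have key : (1 - l) * (det2 u1 (O - P) * det2 u1 (Y - P))
          = -(l * (det2 u1 (Y - P) * det2 u1 (Y - P))) := by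
        linear_combination (-(det2 u1 (Y - P))) * hpsicomb
      nlinarith [key, hpos]
    exact quadX hP hs1S hO hY hXneP hXnes1 hXseg hXOY (by rw [← hu1]; exact hsign)
  · -- Inc S Y P R X : s ∈ [P,R], Y ∈ [X,s]
    obtain ⟨-, -, ⟨s, hsS, hsseg, hYseg⟩⟩ := hbr
    obtain ⟨t1, ht10, ht11, hsr⟩ := seg_dest hsseg
    obtain ⟨t, ht0, ht1, hYr⟩ := seg_dest hYseg
    have hcs : det2 w (s - O) = ((1 - t1) * (-p) + t1 * (-r)) * D0 := by
      have h00 := det2_affine w O P R t1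
      rw [← hsr] at h00
      rw [h00, hcP, hcR]; ring
    have hgs : det2 e (s - O) = 0 := by
      have h00 := det2_affine e O P R t1
      rw [← hsr] at h00
      rw [h00, hgP, hgR]; ring
    have h00 := det2_affine w O X s t
    rw [← hYr] at h00
    rw [hcY, hcX] at h00
    -- 0 = t * det2 w (s - O)
    rcases mul_eq_zero.mp (by linarith : t * det2 w (s - O) = 0) with ht' | hcs'
    · exfalso
      apply hXY
      rw [hYr, ht', zero_smul, add_zero]
    · -- use g
      have h01 := det2_affine e O X s t
      rw [← hYr] at h01
      rw [hgY, hgX, hgs, mul_zero, add_zero] at h01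
      have : b = (1 - t) * a := mul_right_cancel₀ hind (by rw [h01]; ring)
      nlinarith

lemma det2_addsmul (u z d o : ℝ × ℝ) (s : ℝ) :
    det2 u (z + s • d - o) = det2 u (z - o) + s * det2 u d := by
  simp only [det2, Prod.fst_add, Prod.snd_add, Prod.fst_sub, Prod.snd_sub, Prod.smul_fst,
    Prod.smul_snd, smul_eq_mul]
  ring

lemma det2_neg_right (u v : ℝ × ℝ) : det2 u (-v) = - det2 u v := by
  simp only [det2, Prod.fst_neg, Prod.snd_neg]; ring

set_option maxHeartbeats 1600000 in
lemma LB {S : Set (ℝ × ℝ)} (hHP : HP S) (O e : ℝ × ℝ) (he : e ≠ 0) {p q r : ℝ}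
    (hpq : p < q) (hqr : q < r) {X Y : ℝ × ℝ} (hXS : X ∈ S) (hYS : Y ∈ S)
    (hsame : 0 < det2 e (X - O) * det2 e (Y - O)) (hXY : X ≠ Y)
    (hPS : O + p • e ∈ S) (hQS : O + q • e ∈ S) (hRS : O + r • e ∈ S) : Good S := by
  set gX := det2 e (X - O) with hgX
  set gY := det2 e (Y - O) with hgY
  have hgXne : gX ≠ 0 := by
    intro h; rw [h] at hsame; simp at hsame
  set d := Y - X with hd
  have hdne : d ≠ 0 := by rw [hd]; exact sub_ne_zero.mpr (Ne.symm hXY)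
  have hdelta : det2 e d = gY - gX := by rw [hd, det2_diff e X Y O]
  rcases eq_or_ne (det2 e d) 0 with hdel | hdel
  · -- parallel : trapezoid
    have hXYg : gX = gY := by rw [hdelta] at hdel; linarith
    exact trap O e he (ne_of_lt (lt_trans hpq hqr)) hgXne hXYg hXY hPS hRS hXS hYS
  · set del := det2 e d with hdel2
    set st := -gX / del with hst
    set U := X + st • d with hU
    have hgU : det2 e (U - O) = 0 := by
      rw [hU, det2_addsmul, ← hgX, ← hdel2, hst]
      field_simp
      ring
    obtain ⟨u, hu⟩ := rep_of_det2 he hgU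
    have hXrep : X = U + (-st) • d := by rw [hU]; module
    have hYrep : Y = U + (1 - st) • d := by rw [hU, hd]; module
    have hab' : 0 < (-st) * (1 - st) := by
      have hds : del * del > 0 := mul_self_pos.mpr hdel
      have hgYeq : gY = del + gX := by linarith [hdelta]
      have hexp : (-st) * (1 - st) = gX * gY / (del * del) := by
        rw [hst, hgYeq]; field_simp
        ring
      rw [hexp]
      exact div_pos hsame hds
    have habne : (-st) ≠ (1 - st) := by intro h; linarith
    have hQrep : O + q • e = U + (q - u) • e := by rw [hu]; module
    have hRrep : O + r • e = U + (r - u) • e := by rw [hu]; module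
    have hPrep : O + p • e = U + (p - u) • e := by rw [hu]; module
    rcases lt_trichotomy u q with huq | huq | huq
    · -- two ray with Q,R
      refine twoRay U e d hdel (s1 := q - u) (s2 := r - u) ?_ ?_ hab' habne ?_ ?_ ?_ ?_
      · exact mul_pos (by linarith) (by linarith)
      · intro h; exact absurd (show q = r by linarith) (ne_of_lt hqr)
      · rw [← hQrep]; exact hQS
      · rw [← hRrep]; exact hRS
      · rw [← hXrep]; exact hXS
      · rw [← hYrep]; exact hYS
    · -- u = q : LF
      have hUQ : U = O + q • e := by rw [hu, huq]
      have hUS : U ∈ S := by rw [hUQ]; exact hQS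
      have hstne : -st ≠ 0 := by
        intro h
        rw [h] at hab'
        simp at hab'
      rcases lt_or_gt_of_ne hstne with hneg | hpos
      · -- -st < 0 : use w := -d, α = st - 1, β = st
        have h1s : 1 - st < 0 := by nlinarith
        have hinds : det2 e (-d) ≠ 0 := by
          rw [det2_neg_right]
          intro h; apply hdel; linarith
        refine LF hHP U e (-d) hinds (p := p - q) (r := r - q) (a := st - 1) (b := st)
          ?_ ?_ ?_ ?_ hUS ?_ ?_ ?_ ?_
        · linarith
        · linarith
        · linarith
        · linarith
        · rw [show U + (p - q) • e = O + p • e by rw [hUQ]; module]; exact hPS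
        · rw [show U + (r - q) • e = O + r • e by rw [hUQ]; module]; exact hRS
        · rw [show U + (st - 1) • (-d) = U + (1 - st) • d by module, ← hYrep]; exact hYS
        · rw [show U + st • (-d) = U + (-st) • d by module, ← hXrep]; exact hXS
      · -- -st > 0 : α = -st, β = 1 - st
        refine LF hHP U e d hdel (p := p - q) (r := r - q) (a := -st) (b := 1 - st)
          ?_ ?_ ?_ ?_ hUS ?_ ?_ ?_ ?_
        · linarith
        · linarith
        · exact hpos
        · linarith
        · rw [show U + (p - q) • e = O + p • e by rw [hUQ]; module]; exact hPS
        · rw [show U + (r - q) • e = O + r • e by rw [hUQ]; module]; exact hRS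
        · rw [← hXrep]; exact hXS
        · rw [← hYrep]; exact hYS
    · -- q < u : two ray with P,Q
      refine twoRay U e d hdel (s1 := p - u) (s2 := q - u) ?_ ?_ hab' habne ?_ ?_ ?_ ?_
      · exact mul_pos_of_neg_of_neg (by linarith) (by linarith)
      · intro h; exact absurd (show p = q by linarith) (ne_of_lt hpq)
      · rw [← hPrep]; exact hPS
      · rw [← hQrep]; exact hQS
      · rw [← hXrep]; exact hXS
      · rw [← hYrep]; exact hYS

lemma det2_neg_left (u v : ℝ × ℝ) : det2 (-u) v = - det2 u v := by
  simp only [det2, Prod.fst_neg, Prod.snd_neg]; ring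

set_option maxHeartbeats 1600000 in
lemma A2 {S : Set (ℝ × ℝ)} (hHP : HP S) (O e : ℝ × ℝ) (he : e ≠ 0) {u q r : ℝ}
    (huq : u < q) (hqr : q < r) {X Y U : ℝ × ℝ} (hXS : X ∈ S) (hYS : Y ∈ S)
    (hgX : 0 < det2 e (X - O)) (hgY : det2 e (Y - O) < 0)
    (hUseg : U ∈ segment ℝ X Y) (hUrep : U = O + u • e)
    (hQS : O + q • e ∈ S) (hRS : O + r • e ∈ S) : Good S := by
  set gX := det2 e (X - O) with hgXd
  set gY := det2 e (Y - O) with hgYd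
  set Q := O + q • e with hQd
  set R := O + r • e with hRd
  have hgQ : det2 e (Q - O) = 0 := by rw [hQd, det2_param, det2_self, mul_zero]
  have hgR : det2 e (R - O) = 0 := by rw [hRd, det2_param, det2_self, mul_zero]
  have hQR : Q ≠ R := by
    rw [hQd, hRd]
    intro h
    rw [add_right_inj] at h
    have := smul_cancel he h
    linarith
  have hXY : X ≠ Y := by
    intro h; rw [hgXd, h, ← hgYd] at hgX; linarith
  obtain ⟨m0, hm00, hm01, hUr⟩ := seg_dest hUseg
  have hgU : det2 e (U - O) = 0 := by rw [hUrep, det2_param, det2_self, mul_zero]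
  have hm0eq : (1 - m0) * gX + m0 * gY = 0 := by
    have h00 := det2_affine e O X Y m0
    rw [← hUr] at h00
    rw [hgU] at h00
    rw [hgXd, hgYd]; linarith
  have huniq : ∀ s', s' ∈ segment ℝ X Y → det2 e (s' - O) = 0 → s' = U := by
    intro s' hs' h0
    obtain ⟨m, hm1, hm2, hsr⟩ := seg_dest hs'
    have hmeq : (1 - m) * gX + m * gY = 0 := by
      have h00 := det2_affine e O X Y m
      rw [← hsr] at h00
      rw [h0] at h00
      rw [hgXd, hgYd]; linarith
    have : (m - m0) * (gY - gX) = 0 := by linarith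
    rcases mul_eq_zero.mp this with h' | h'
    · have : m = m0 := by linarith
      rw [hsr, hUr, this]
    · exfalso; linarith
  rcases hHP X Y Q R hXS hYS hQS hRS with hbr | hbr | hbr | hbr | hbr | hbr | hbr
  · -- Cross X Y Q R
    obtain ⟨s, hsS, hs1, hs2⟩ := hbr
    obtain ⟨t2, ht20, ht21, hsr2⟩ := seg_dest hs2
    have hgs : det2 e (s - O) = 0 := by
      have h00 := det2_affine e O Q R t2
      rw [← hsr2] at h00
      rw [h00, hgQ, hgR]; ring
    have hsU := huniq s hs1 hgs
    rw [hsU, hUrep, hQd, hRd] at hsr2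
    have : (u : ℝ) • e = (q + t2 * (r - q)) • e := by
      have h5 : O + u • e = O + (q + t2 * (r - q)) • e := by
        rw [hsr2]; module
      rwa [add_right_inj] at h5
    have huval := smul_cancel he this
    nlinarith
  · -- Cross X Q Y R
    obtain ⟨s, hsS, hs1, hs2⟩ := hbr
    obtain ⟨t1, ht10, ht11, hsr1⟩ := seg_dest hs1
    obtain ⟨t2, ht20, ht21, hsr2⟩ := seg_dest hs2
    have h1 : det2 e (s - O) = (1 - t1) * gX := by
      have h00 := det2_affine e O X Q t1
      rw [← hsr1] at h00
      rw [h00, hgQ, ← hgXd]; ring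
    have h2 : det2 e (s - O) = (1 - t2) * gY := by
      have h00 := det2_affine e O Y R t2
      rw [← hsr2] at h00
      rw [h00, hgR, ← hgYd]; ring
    have h3 : (1 - t1) * gX ≥ 0 := mul_nonneg (by linarith) (le_of_lt hgX)
    have h4 : (1 - t2) * gY ≤ 0 := mul_nonpos_of_nonneg_of_nonpos (by linarith) (le_of_lt hgY)
    have ht1' : t1 = 1 := by nlinarith
    have ht2' : t2 = 1 := by nlinarith
    exfalso; apply hQR
    have hsQ : s = Q := by rw [hsr1, ht1']; module
    have hsR : s = R := by rw [hsr2, ht2']; module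
    rw [← hsQ, ← hsR]
  · -- Cross X R Y Q
    obtain ⟨s, hsS, hs1, hs2⟩ := hbr
    obtain ⟨t1, ht10, ht11, hsr1⟩ := seg_dest hs1
    obtain ⟨t2, ht20, ht21, hsr2⟩ := seg_dest hs2
    have h1 : det2 e (s - O) = (1 - t1) * gX := by
      have h00 := det2_affine e O X R t1
      rw [← hsr1] at h00
      rw [h00, hgR, ← hgXd]; ring
    have h2 : det2 e (s - O) = (1 - t2) * gY := by
      have h00 := det2_affine e O Y Q t2
      rw [← hsr2] at h00
      rw [h00, hgQ, ← hgYd]; ring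
    have h3 : (1 - t1) * gX ≥ 0 := mul_nonneg (by linarith) (le_of_lt hgX)
    have h4 : (1 - t2) * gY ≤ 0 := mul_nonpos_of_nonneg_of_nonpos (by linarith) (le_of_lt hgY)
    have ht1' : t1 = 1 := by nlinarith
    have ht2' : t2 = 1 := by nlinarith
    exfalso; apply hQR
    have hsR : s = R := by rw [hsr1, ht1']; module
    have hsQ : s = Q := by rw [hsr2, ht2']; module
    rw [← hsQ, ← hsR]
  · -- Inc X Y Q R : s ∈ [Q,R], X ∈ [Y,s]
    obtain ⟨⟨s, hsS, hs1, hs2⟩, -, -⟩ := hbr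
    obtain ⟨t2, ht20, ht21, hsr2⟩ := seg_dest hs1
    obtain ⟨t, ht0, ht1, hXr⟩ := seg_dest hs2
    have hgs : det2 e (s - O) = 0 := by
      have h00 := det2_affine e O Q R t2
      rw [← hsr2] at h00
      rw [h00, hgQ, hgR]; ring
    have h00 := det2_affine e O Y s t
    rw [← hXr] at h00
    rw [hgs, mul_zero, add_zero, ← hgXd, ← hgYd] at h00
    nlinarith
  · -- Inc Y X Q R : s ∈ [Q,R], Y ∈ [X,s]
    obtain ⟨⟨s, hsS, hs1, hs2⟩, -, -⟩ := hbr
    obtain ⟨t2, ht20, ht21, hsr2⟩ := seg_dest hs1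
    obtain ⟨t, ht0, ht1, hYr⟩ := seg_dest hs2
    have hgs : det2 e (s - O) = 0 := by
      have h00 := det2_affine e O Q R t2
      rw [← hsr2] at h00
      rw [h00, hgQ, hgR]; ring
    have h00 := det2_affine e O X s t
    rw [← hYr] at h00
    rw [hgs, mul_zero, add_zero, ← hgXd, ← hgYd] at h00
    nlinarith
  · -- Inc Q X Y R : s ∈ [X,Y], Q ∈ [R,s]
    obtain ⟨-, -, ⟨s, hsS, hs1, hs2⟩⟩ := hbr
    obtain ⟨t, ht0, ht1, hQr⟩ := seg_dest hs2
    have h00 := det2_affine e O R s t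
    rw [← hQr] at h00
    rw [hgQ, hgR] at h00
    rcases mul_eq_zero.mp (by linarith : t * det2 e (s - O) = 0) with ht' | hgs
    · exfalso; apply hQR
      rw [hQr, ht', zero_smul, add_zero]
    · have hsU := huniq s hs1 hgs
      rw [hsU] at hsS
      -- apply LB with line (U, d := Y - X)
      set d := Y - X with hd
      have hdel : det2 e d = gY - gX := by rw [hd, det2_diff e X Y O, ← hgXd, ← hgYd]
      have hde : det2 d e = gX - gY := by rw [det2_swap, hdel]; ring
      have hdepos : 0 < det2 d e := by rw [hde]; linarith
      have hm0pos : 0 < m0 := by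
        rcases lt_or_eq_of_le hm00 with h' | h'
        · exact h'
        · exfalso; rw [← h'] at hm0eq; simp at hm0eq; linarith
      have hm0lt : m0 < 1 := by
        rcases lt_or_eq_of_le hm01 with h' | h'
        · exact h'
        · exfalso; rw [h'] at hm0eq; simp at hm0eq; linarith
      have hXrep : X = U + (-m0) • d := by rw [hUr, hd]; module
      have hYrep : Y = U + (1 - m0) • d := by rw [hUr, hd]; module
      have hQrep2 : Q = U + (q - u) • e := by rw [hQd, hUrep]; module
      have hRrep2 : R = U + (r - u) • e := by rw [hRd, hUrep]; module
      have hcQ : det2 d (Q - U) = (q - u) * det2 d e := by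
        rw [hQrep2, det2_param]
      have hcR : det2 d (R - U) = (r - u) * det2 d e := by
        rw [hRrep2, det2_param]
      have hdne : d ≠ 0 := by rw [hd]; exact sub_ne_zero.mpr (Ne.symm hXY)
      refine LB hHP U d hdne (p := -m0) (q := 0) (r := 1 - m0)
        (by linarith) (by linarith) (X := Q) (Y := R) hQS hRS ?_ hQR ?_ ?_ ?_
      · rw [hcQ, hcR]
        have h5 : 0 < (q - u) * (r - u) := mul_pos (by linarith) (by linarith)
        calc (0:ℝ) < ((q - u) * (r - u)) * (det2 d e * det2 d e) :=
              mul_pos h5 (mul_pos hdepos hdepos)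
          _ = (q - u) * det2 d e * ((r - u) * det2 d e) := by ring
      · rw [← hXrep]; exact hXS
      · rw [zero_smul, add_zero]; exact hsS
      · rw [← hYrep]; exact hYS
  · -- Inc R X Y Q : s ∈ [X,Y], R ∈ [Q,s]
    obtain ⟨-, -, ⟨s, hsS, hs1, hs2⟩⟩ := hbr
    obtain ⟨t, ht0, ht1, hRr⟩ := seg_dest hs2
    have h00 := det2_affine e O Q s t
    rw [← hRr] at h00
    rw [hgQ, hgR] at h00
    rcases mul_eq_zero.mp (by linarith : t * det2 e (s - O) = 0) with ht' | hgs
    · exfalso; apply hQR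
      rw [hRr, ht', zero_smul, add_zero]
    · have hsU := huniq s hs1 hgs
      rw [hsU, hUrep] at hRr
      rw [hRd, hQd] at hRr
      have : (r : ℝ) • e = (q + t * (u - q)) • e := by
        have h5 : O + r • e = O + (q + t * (u - q)) • e := by
          rw [hRr]; module
        rwa [add_right_inj] at h5
      have hrval := smul_cancel he this
      nlinarith

set_option maxHeartbeats 1600000 in
lemma LAcore {S : Set (ℝ × ℝ)} (hHP : HP S) (O e : ℝ × ℝ) (he : e ≠ 0) {p q r : ℝ}
    (hpq : p < q) (hqr : q < r) {X Y : ℝ × ℝ} (hXS : X ∈ S) (hYS : Y ∈ S)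
    (hgX : 0 < det2 e (X - O)) (hgY : det2 e (Y - O) < 0)
    (hPS : O + p • e ∈ S) (hQS : O + q • e ∈ S) (hRS : O + r • e ∈ S) : Good S := by
  set gX := det2 e (X - O) with hgXd
  set gY := det2 e (Y - O) with hgYd
  have hden : 0 < gX - gY := by linarith
  set st := gX / (gX - gY) with hst
  have hst0 : 0 < st := div_pos hgX hden
  have hst1 : st < 1 := by
    rw [hst, div_lt_one hden]; linarith
  set U := X + st • (Y - X) with hU
  have hgU : det2 e (U - O) = 0 := by
    rw [hU, det2_addsmul, det2_diff e X Y O, ← hgXd, ← hgYd, hst]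
    field_simp
    ring
  obtain ⟨u, hu⟩ := rep_of_det2 he hgU
  have hUseg : U ∈ segment ℝ X Y := by
    have := seg_intro (p := X) (q := Y) (le_of_lt hst0) (le_of_lt hst1)
    rwa [← hU] at this
  rcases lt_trichotomy u q with huq | huq | huq
  · exact A2 hHP O e he huq hqr hXS hYS hgX hgY hUseg hu hQS hRS
  · -- u = q : quadX P R X Y with E = U
    have hUq : U = O + q • e := by rw [hu, huq]
    have hEP : U ≠ O + p • e := by
      rw [hUq]
      intro h
      rw [add_right_inj] at h
      have := smul_cancel he h
      linarith
    have hER : U ≠ O + r • e := by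
      rw [hUq]
      intro h
      rw [add_right_inj] at h
      have := smul_cancel he h
      linarith
    have htb : (0:ℝ) ≤ (q - p) / (r - p) :=
      div_nonneg (by linarith) (by linarith)
    have htb2 : (q - p) / (r - p) ≤ 1 := by
      rw [div_le_one (by linarith)]; linarith
    have hseg : U ∈ segment ℝ (O + p • e) (O + r • e) := by
      have h0 := seg_intro (p := O + p • e) (q := O + r • e) htb htb2
      have hvec : O + p • e + ((q - p) / (r - p)) • (O + r • e - (O + p • e)) = O + q • e := by
        rw [show O + r • e - (O + p • e) = (r - p) • e by module, smul_smul,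
          div_mul_cancel₀ _ (show r - p ≠ 0 by linarith)]
        module
      rw [hvec] at h0
      rwa [← hUq] at h0
    have h1 : det2 (O + r • e - (O + p • e)) (X - (O + p • e)) = (r - p) * gX := by
      rw [show O + r • e - (O + p • e) = (r - p) • e by module, det2_smul_left, det2_shift,
        ← hgXd]
    have h2 : det2 (O + r • e - (O + p • e)) (Y - (O + p • e)) = (r - p) * gY := by
      rw [show O + r • e - (O + p • e) = (r - p) • e by module, det2_smul_left, det2_shift,
        ← hgYd]
    refine quadX hPS hRS hXS hYS hEP hER hseg hUseg ?_
    rw [h1, h2]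
    have h5 : 0 < (r - p) * (r - p) := mul_pos (by linarith) (by linarith)
    calc (r - p) * gX * ((r - p) * gY) = ((r - p) * (r - p)) * (gX * gY) := by ring
      _ < 0 := mul_neg_of_pos_of_neg h5 (mul_neg_of_pos_of_neg hgX hgY)
  · -- q < u : mirror
    have hgY' : 0 < det2 (-e) (Y - O) := by rw [det2_neg_left]; linarith
    have hgX' : det2 (-e) (X - O) < 0 := by rw [det2_neg_left]; linarith
    have hUseg' : U ∈ segment ℝ Y X := by rw [segment_symm]; exact hUseg
    have hUrep' : U = O + (-u) • (-e) := by rw [hu]; module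
    refine A2 hHP O (-e) (neg_ne_zero.mpr he) (u := -u) (q := -q) (r := -p)
      (by linarith) (by linarith) hYS hXS hgY' hgX' hUseg' hUrep' ?_ ?_
    · rw [show O + (-q) • (-e) = O + q • e by module]; exact hQS
    · rw [show O + (-p) • (-e) = O + p • e by module]; exact hPS

lemma LA {S : Set (ℝ × ℝ)} (hHP : HP S) (O e : ℝ × ℝ) (he : e ≠ 0) {p q r : ℝ}
    (hpq : p < q) (hqr : q < r) {X Y : ℝ × ℝ} (hXS : X ∈ S) (hYS : Y ∈ S)
    (hopp : det2 e (X - O) * det2 e (Y - O) < 0)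
    (hPS : O + p • e ∈ S) (hQS : O + q • e ∈ S) (hRS : O + r • e ∈ S) : Good S := by
  rcases lt_or_ge 0 (det2 e (X - O)) with hx | hx
  · exact LAcore hHP O e he hpq hqr hXS hYS hx (by nlinarith) hPS hQS hRS
  · have hx' : det2 e (X - O) < 0 := by
      rcases lt_or_eq_of_le hx with h' | h'
      · exact h'
      · exfalso; rw [h', zero_mul] at hopp; exact lt_irrefl 0 hopp
    exact LAcore hHP O e he hpq hqr hYS hXS (by nlinarith) hx' hPS hQS hRS

set_option maxHeartbeats 800000 in
lemma L3 {S : Set (ℝ × ℝ)} (hHP : HP S) (hNP : NP S) {P Q R X : ℝ × ℝ}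
    (hPS : P ∈ S) (hQS : Q ∈ S) (hRS : R ∈ S) (hXS : X ∈ S)
    (hseg : Q ∈ segment ℝ P R) (hQP : Q ≠ P) (hQR : Q ≠ R)
    (hXoff : det2 (R - P) (X - P) ≠ 0) : Good S := by
  set e := R - P with hed
  obtain ⟨t0, ht00, ht01, hQr⟩ := seg_dest hseg
  have hPR : P ≠ R := by
    intro h
    apply hQP
    rw [hQr, ← h, sub_self, smul_zero, add_zero]
  have hene : e ≠ 0 := by rw [hed]; exact sub_ne_zero.mpr (Ne.symm hPR)
  have ht0ne0 : t0 ≠ 0 := by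
    intro h; apply hQP; rw [hQr, h, zero_smul, add_zero]
  have ht0ne1 : t0 ≠ 1 := by
    intro h; apply hQR; rw [hQr, h, one_smul, ← hed]; module
  have ht0pos : 0 < t0 := lt_of_le_of_ne ht00 (Ne.symm ht0ne0)
  have ht0lt : t0 < 1 := lt_of_le_of_ne ht01 ht0ne1
  obtain ⟨Y, hYS, hYl, hYX⟩ := hNP P e hene X
  have hgY : det2 e (Y - P) ≠ 0 := by
    intro h0
    obtain ⟨t, ht⟩ := rep_of_det2 hene h0
    exact hYl t ht
  rw [← hed] at hQr
  have hmemP : P + (0:ℝ) • e ∈ S := by rw [zero_smul, add_zero]; exact hPS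
  have hmemQ : P + t0 • e ∈ S := by rw [← hQr]; exact hQS
  have hmemR : P + (1:ℝ) • e ∈ S := by rw [one_smul, hed, show P + (R - P) = R by module]; exact hRS
  rcases lt_or_ge 0 (det2 e (X - P) * det2 e (Y - P)) with hpos | hle
  · exact LB hHP P e hene ht0pos ht0lt hXS hYS hpos (Ne.symm hYX) hmemP hmemQ hmemR
  · have hneg : det2 e (X - P) * det2 e (Y - P) < 0 :=
      lt_of_le_of_ne hle (mul_ne_zero hXoff hgY)
    exact LA hHP P e hene ht0pos ht0lt hXS hYS hneg hmemP hmemQ hmemR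

set_option maxHeartbeats 1600000 in
lemma LIside {S : Set (ℝ × ℝ)} (hHP : HP S) (hNP : NP S) {A B C D s : ℝ × ℝ}
    (hAS : A ∈ S) (hBS : B ∈ S) (hCS : C ∈ S) (hDS : D ∈ S) (hsS : s ∈ S)
    (hAB : A ≠ B) (hC : 0 < det2 (B - A) (C - A)) (hD : det2 (B - A) (D - A) < 0)
    {σ : ℝ} (hsr : s = A + σ • (B - A)) (hs2 : s ∈ segment ℝ C D) : Good S := by
  set eAB := B - A with heABd
  have heAB : eAB ≠ 0 := by rw [heABd]; exact sub_ne_zero.mpr (Ne.symm hAB)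
  have hCD : C ≠ D := by
    intro h; rw [h] at hC; linarith
  have hCDne : D - C ≠ 0 := sub_ne_zero.mpr (Ne.symm hCD)
  have hCA : C - A ≠ 0 := by
    intro h; rw [h, det2_zero_right] at hC; linarith
  have hDA : D - A ≠ 0 := by
    intro h; rw [h, det2_zero_right] at hD; linarith
  obtain ⟨μ, hμ0, hμ1, hsr2⟩ := seg_dest hs2
  have hgs0 : det2 eAB (s - A) = 0 := by
    rw [hsr, show A + σ • (B - A) - A = σ • eAB by rw [heABd]; module, det2_smul_right,
      det2_self, mul_zero]
  have hcomb : (1 - μ) * det2 eAB (C - A) + μ * det2 eAB (D - A) = 0 := by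
    have h00 := det2_affine eAB A C D μ
    rw [← hsr2] at h00
    rw [hgs0] at h00
    linarith
  have hsC : s ≠ C := by
    intro h; rw [h] at hgs0; linarith
  have hsD : s ≠ D := by
    intro h; rw [h] at hgs0; linarith
  -- key auxiliary : if A (resp B) equals s, off-point argument
  have hoffCD : ∀ Z : ℝ × ℝ, det2 eAB (Z - A) ≠ 0 → Z = C + μ • (D - C) →
      det2 (D - C) (B - C) ≠ 0 ∨ True := fun _ _ _ => Or.inr trivial
  rcases lt_trichotomy σ 0 with hσ | hσ | hσ
  · -- σ < 0 : L3 (s, A, B, C)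
    have hsA : s ≠ A := by
      intro h
      rw [hsr] at h
      have h2 : σ • eAB = 0 := by
        have := h
        rw [heABd] at this ⊢
        have h3 : A + σ • (B - A) - A = 0 - 0 := by rw [this]; module
        rw [show A + σ • (B - A) - A = σ • (B - A) by module] at h3
        rw [h3]; module
      rcases smul_eq_zero.mp h2 with h' | h'
      · linarith
      · exact heAB h'
    have hsegA : A ∈ segment ℝ s B := by
      have hb1 : (0:ℝ) ≤ -σ / (1 - σ) := div_nonneg (by linarith) (by linarith)
      have hb2 : -σ / (1 - σ) ≤ 1 := by
        rw [div_le_one (by linarith : (0:ℝ) < 1 - σ)]; linarith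
      have h0 := seg_intro (p := s) (q := B) hb1 hb2
      have hvec : s + (-σ / (1 - σ)) • (B - s) = A := by
        rw [show B - s = (1 - σ) • eAB by rw [hsr, heABd]; module, smul_smul,
          div_mul_cancel₀ _ (show (1:ℝ) - σ ≠ 0 by linarith), hsr]
        module
      rwa [hvec] at h0
    refine L3 hHP hNP hsS hAS hBS hCS hsegA (Ne.symm hsA) hAB ?_
    rw [show B - s = (1 - σ) • eAB by rw [hsr, heABd]; module, det2_smul_left]
    have h5 : det2 eAB (C - s) = det2 eAB (C - A) := by
      rw [det2_diff eAB s C A, hgs0, sub_zero]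
    rw [h5]
    exact mul_ne_zero (by linarith) (ne_of_gt hC)
  · -- σ = 0 : s = A, so A strictly inside [C,D] : L3 (C, A, D, B)
    have hsA : s = A := by rw [hsr, hσ, zero_smul, add_zero]
    rw [hsA] at hsr2 hs2 hsC hsD
    refine L3 hHP hNP hCS hAS hDS hBS hs2 hsC hsD ?_
    -- det2 (D - C) (B - C) ≠ 0
    intro h0
    obtain ⟨k, hk⟩ := rep_of_det2 hCDne h0
    have heq : eAB = (k - μ) • (D - C) := by
      rw [heABd, hk, hsr2]; module
    have hgap : det2 eAB (D - A) - det2 eAB (C - A) = 0 := by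
      rw [← det2_diff eAB C D A, heq, det2_smul_left, det2_self, mul_zero]
    linarith
  · rcases lt_trichotomy σ 1 with hσ1 | hσ1 | hσ1
    · -- 0 < σ < 1 : quadX
      have hsegAB : s ∈ segment ℝ A B := by
        have h0 := seg_intro (p := A) (q := B) (le_of_lt hσ) (le_of_lt hσ1)
        rwa [← hsr] at h0
      have hsA : s ≠ A := by
        intro h
        rw [h] at hsr
        have h2 : (0:ℝ) • eAB = σ • eAB := by
          rw [zero_smul, heABd]
          have : A + σ • (B - A) - A = 0 := by rw [← hsr]; module
          rw [show A + σ • (B - A) - A = σ • (B - A) by module] at this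
          rw [this]
        have := smul_cancel heAB h2
        linarith
      have hsB : s ≠ B := by
        intro h
        rw [hsr] at h
        have h2 : σ • eAB = (1:ℝ) • eAB := by
          rw [one_smul, heABd]
          have h3 : σ • (B - A) = B - A := by
            have h4 : A + σ • (B - A) - A = B - A := by rw [h]
            rw [show A + σ • (B - A) - A = σ • (B - A) by module] at h4
            exact h4
          rw [h3]
        have := smul_cancel heAB h2
        linarith
      exact quadX hAS hBS hCS hDS hsA hsB hsegAB hs2
        (mul_neg_of_pos_of_neg hC hD)
    · -- σ = 1 : s = B strictly inside [C,D] : L3 (C, B, D, A)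
      have hsB : s = B := by rw [hsr, hσ1, one_smul, heABd]; module
      rw [hsB] at hsr2 hs2 hsC hsD
      refine L3 hHP hNP hCS hBS hDS hAS hs2 hsC hsD ?_
      intro h0
      obtain ⟨k, hk⟩ := rep_of_det2 hCDne h0
      have heq : eAB = (μ - k) • (D - C) := by
        rw [heABd, hk, hsr2]; module
      have hgap : det2 eAB (D - A) - det2 eAB (C - A) = 0 := by
        rw [← det2_diff eAB C D A, heq, det2_smul_left, det2_self, mul_zero]
      linarith
    · -- σ > 1 : L3 (A, B, s, C)
      have hsB : s ≠ B := by
        intro h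
        rw [hsr] at h
        have h2 : σ • eAB = (1:ℝ) • eAB := by
          rw [one_smul, heABd]
          have h4 : A + σ • (B - A) - A = B - A := by rw [h]
          rw [show A + σ • (B - A) - A = σ • (B - A) by module] at h4
          exact h4
        have := smul_cancel heAB h2
        linarith
      have hsegB : B ∈ segment ℝ A s := by
        have hb1 : (0:ℝ) ≤ 1 / σ := by positivity
        have hb2 : 1 / σ ≤ 1 := by
          rw [div_le_one (by linarith)]; linarith
        have h0 := seg_intro (p := A) (q := s) hb1 hb2
        have hvec : A + (1 / σ) • (s - A) = B := by
          rw [show s - A = σ • eAB by rw [hsr, heABd]; module, smul_smul,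
            one_div_mul_cancel (show σ ≠ 0 by linarith), one_smul, heABd]
          module
        rwa [hvec] at h0
      refine L3 hHP hNP hAS hBS hsS hCS hsegB (Ne.symm hAB) (Ne.symm hsB) ?_
      rw [show s - A = σ • eAB by rw [hsr, heABd]; module, det2_smul_left]
      exact mul_ne_zero (by linarith) (ne_of_gt hC)

set_option maxHeartbeats 1600000 in
lemma LI {S : Set (ℝ × ℝ)} (hHP : HP S) (hNP : NP S) {A B C D : ℝ × ℝ}
    (hAS : A ∈ S) (hBS : B ∈ S) (hCS : C ∈ S) (hDS : D ∈ S) (hAB : A ≠ B)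
    (hC : 0 < det2 (B - A) (C - A)) (hD : det2 (B - A) (D - A) < 0) : Good S := by
  set eAB := B - A with heABd
  have heAB : eAB ≠ 0 := by rw [heABd]; exact sub_ne_zero.mpr (Ne.symm hAB)
  have hgB : det2 eAB (B - A) = 0 := by rw [← heABd, det2_self]
  have hgA : det2 eAB (A - A) = 0 := det2_zero_sub eAB A
  rcases hHP A B C D hAS hBS hCS hDS with hbr | hbr | hbr | hbr | hbr | hbr | hbr
  · -- Cross A B C D
    obtain ⟨s, hsS, hs1, hs2⟩ := hbr
    obtain ⟨σ, hσ0, hσ1, hsr1⟩ := seg_dest hs1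
    have hsr1' : s = A + σ • eAB := by rw [hsr1, heABd]
    exact LIside hHP hNP hAS hBS hCS hDS hsS hAB hC hD hsr1' hs2
  · -- Cross A C B D : killed
    obtain ⟨s, hsS, hs1, hs2⟩ := hbr
    obtain ⟨t1, ht10, ht11, hsr1⟩ := seg_dest hs1
    obtain ⟨t2, ht20, ht21, hsr2⟩ := seg_dest hs2
    have h1 : det2 eAB (s - A) = t1 * det2 eAB (C - A) := by
      have h00 := det2_affine eAB A A C t1
      rw [← hsr1] at h00
      rw [h00, hgA]; ring
    have h2 : det2 eAB (s - A) = t2 * det2 eAB (D - A) := by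
      have h00 := det2_affine eAB A B D t2
      rw [← hsr2] at h00
      rw [h00, hgB]; ring
    have ht1' : t1 = 0 := by nlinarith
    have ht2' : t2 = 0 := by nlinarith
    exfalso; apply hAB
    have hsA : s = A := by rw [hsr1, ht1', zero_smul, add_zero]
    have hsB : s = B := by rw [hsr2, ht2', zero_smul, add_zero]
    rw [← hsA, ← hsB]
  · -- Cross A D B C : killed
    obtain ⟨s, hsS, hs1, hs2⟩ := hbr
    obtain ⟨t1, ht10, ht11, hsr1⟩ := seg_dest hs1
    obtain ⟨t2, ht20, ht21, hsr2⟩ := seg_dest hs2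
    have h1 : det2 eAB (s - A) = t1 * det2 eAB (D - A) := by
      have h00 := det2_affine eAB A A D t1
      rw [← hsr1] at h00
      rw [h00, hgA]; ring
    have h2 : det2 eAB (s - A) = t2 * det2 eAB (C - A) := by
      have h00 := det2_affine eAB A B C t2
      rw [← hsr2] at h00
      rw [h00, hgB]; ring
    have ht1' : t1 = 0 := by nlinarith
    have ht2' : t2 = 0 := by nlinarith
    exfalso; apply hAB
    have hsA : s = A := by rw [hsr1, ht1', zero_smul, add_zero]
    have hsB : s = B := by rw [hsr2, ht2', zero_smul, add_zero]
    rw [← hsA, ← hsB]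
  · -- Inc A B C D : s ∈ [C,D], A ∈ [B,s]
    obtain ⟨⟨s, hsS, hs1, hs2⟩, -, -⟩ := hbr
    obtain ⟨t, ht0, ht1, hAr⟩ := seg_dest hs2
    have h00 := det2_affine eAB A B s t
    rw [← hAr] at h00
    rw [hgA, hgB] at h00
    rcases mul_eq_zero.mp (by linarith : t * det2 eAB (s - A) = 0) with ht' | hgs
    · exfalso; apply hAB
      rw [hAr, ht', zero_smul, add_zero]
    · obtain ⟨σ, hσr⟩ := rep_of_det2 heAB hgs
      exact LIside hHP hNP hAS hBS hCS hDS hsS hAB hC hD hσr hs1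
  · -- Inc B A C D : s ∈ [C,D], B ∈ [A,s]
    obtain ⟨⟨s, hsS, hs1, hs2⟩, -, -⟩ := hbr
    obtain ⟨t, ht0, ht1, hBr⟩ := seg_dest hs2
    have h00 := det2_affine eAB A A s t
    rw [← hBr] at h00
    rw [hgA, hgB] at h00
    rcases mul_eq_zero.mp (by linarith : t * det2 eAB (s - A) = 0) with ht' | hgs
    · exfalso; apply hAB
      rw [hBr, ht', zero_smul, add_zero]
    · obtain ⟨σ, hσr⟩ := rep_of_det2 heAB hgs
      exact LIside hHP hNP hAS hBS hCS hDS hsS hAB hC hD hσr hs1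
  · -- Inc C A B D : s ∈ [A,B], C ∈ [D,s] : killed
    obtain ⟨-, -, ⟨s, hsS, hs1, hs2⟩⟩ := hbr
    obtain ⟨t1, ht10, ht11, hsr1⟩ := seg_dest hs1
    obtain ⟨t, ht0, ht1, hCr⟩ := seg_dest hs2
    have hgs : det2 eAB (s - A) = 0 := by
      have h00 := det2_affine eAB A A B t1
      rw [← hsr1] at h00
      rw [h00, hgA, hgB]; ring
    have h00 := det2_affine eAB A D s t
    rw [← hCr] at h00
    rw [hgs, mul_zero, add_zero] at h00
    nlinarith
  · -- Inc D A B C : s ∈ [A,B], D ∈ [C,s] : killed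
    obtain ⟨-, -, ⟨s, hsS, hs1, hs2⟩⟩ := hbr
    obtain ⟨t1, ht10, ht11, hsr1⟩ := seg_dest hs1
    obtain ⟨t, ht0, ht1, hDr⟩ := seg_dest hs2
    have hgs : det2 eAB (s - A) = 0 := by
      have h00 := det2_affine eAB A A B t1
      rw [← hsr1] at h00
      rw [h00, hgA, hgB]; ring
    have h00 := det2_affine eAB A C s t
    rw [← hDr] at h00
    rw [hgs, mul_zero, add_zero] at h00
    nlinarith


lemma det2_cycle (X Y Z : ℝ × ℝ) : det2 (Y - X) (Z - X) = det2 (Z - Y) (X - Y) := by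
  simp only [det2, Prod.fst_sub, Prod.snd_sub]; ring

set_option maxHeartbeats 1600000 in
lemma LII {S : Set (ℝ × ℝ)} (hHP : HP S) (hNP : NP S) {A B C D : ℝ × ℝ}
    (hAS : A ∈ S) (hBS : B ∈ S) (hCS : C ∈ S) (hDS : D ∈ S) (hAB : A ≠ B) (hCD : C ≠ D)
    (hC : 0 < det2 (B - A) (C - A)) (hD : 0 < det2 (B - A) (D - A)) : Good S := by
  set eAB := B - A with heABd
  have heAB : eAB ≠ 0 := by rw [heABd]; exact sub_ne_zero.mpr (Ne.symm hAB)
  have hgB : det2 eAB (B - A) = 0 := by rw [← heABd, det2_self]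
  have hgA : det2 eAB (A - A) = 0 := det2_zero_sub eAB A
  have hCA : C - A ≠ 0 := by
    intro h; rw [h, det2_zero_right] at hC; linarith
  have hDA : D - A ≠ 0 := by
    intro h; rw [h, det2_zero_right] at hD; linarith
  have hCB : C ≠ B := by
    intro h
    rw [h] at hC
    rw [show det2 eAB (B - A) = 0 from hgB] at hC
    linarith
  have hDB : D ≠ B := by
    intro h
    rw [h] at hD
    rw [show det2 eAB (B - A) = 0 from hgB] at hD
    linarith
  rcases hHP A B C D hAS hBS hCS hDS with hbr | hbr | hbr | hbr | hbr | hbr | hbr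
  · -- Cross A B C D : killed
    obtain ⟨s, hsS, hs1, hs2⟩ := hbr
    obtain ⟨t1, ht10, ht11, hsr1⟩ := seg_dest hs1
    obtain ⟨t2, ht20, ht21, hsr2⟩ := seg_dest hs2
    have hgs : det2 eAB (s - A) = 0 := by
      have h00 := det2_affine eAB A A B t1
      rw [← hsr1] at h00
      rw [h00, hgA, hgB]; ring
    have h2 : det2 eAB (s - A) = (1 - t2) * det2 eAB (C - A) + t2 * det2 eAB (D - A) := by
      have h00 := det2_affine eAB A C D t2
      rw [← hsr2] at h00
      exact h00
    have hpos := combo_pos hC hD ht20 ht21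
    rw [hgs] at h2
    linarith
  · -- Cross A C B D
    obtain ⟨s, hsS, hs1, hs2⟩ := hbr
    obtain ⟨t1, ht10, ht11, hsr1⟩ := seg_dest hs1
    obtain ⟨t2, ht20, ht21, hsr2⟩ := seg_dest hs2
    have h1 : det2 eAB (s - A) = t1 * det2 eAB (C - A) := by
      have h00 := det2_affine eAB A A C t1
      rw [← hsr1] at h00
      rw [h00, hgA]; ring
    have h2 : det2 eAB (s - A) = t2 * det2 eAB (D - A) := by
      have h00 := det2_affine eAB A B D t2
      rw [← hsr2] at h00
      rw [h00, hgB]; ring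
    have ht2ne : t2 ≠ 0 := by
      intro h
      rw [h, zero_mul] at h2
      have ht1' : t1 = 0 := by nlinarith
      apply hAB
      have hsA : s = A := by rw [hsr1, ht1', zero_smul, add_zero]
      have hsB : s = B := by rw [hsr2, h, zero_smul, add_zero]
      rw [← hsA, ← hsB]
    have ht1ne : t1 ≠ 0 := by
      intro h
      rw [h, zero_mul] at h1
      have h3 : t2 * det2 eAB (D - A) = 0 := by linarith
      rcases mul_eq_zero.mp h3 with h' | h'
      · exact ht2ne h'
      · linarith
    have hsA : s ≠ A := by
      intro h
      rw [h, det2_zero_sub] at h1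
      have h3 : t1 = 0 := by
        rcases mul_eq_zero.mp h1.symm with h' | h'
        · exact h'
        · exfalso; linarith
      exact ht1ne h3
    rcases eq_or_ne t1 1 with ht1e | ht1e
    · -- s = C ∈ [B,D] : L3 (B, C, D, A)
      have hsC : s = C := by rw [hsr1, ht1e, one_smul]; module
      rw [hsC] at hs2
      refine L3 hHP hNP hBS hCS hDS hAS hs2 hCB hCD ?_
      have hcyc : det2 (D - B) (A - B) = det2 eAB (D - A) := by
        rw [heABd, ← det2_cycle A B D]
      rw [hcyc]
      linarith
    · -- generic : s strictly inside [A,C] : L3 (A, s, C, B)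
      have hsC : s ≠ C := by
        intro h
        apply ht1e
        rw [h] at hsr1
        have h5 : (1 : ℝ) • (C - A) = t1 • (C - A) := by
          rw [one_smul]
          have h6 : C - A = A + t1 • (C - A) - A := by rw [← hsr1]
          rw [show A + t1 • (C - A) - A = t1 • (C - A) by module] at h6
          exact h6
        exact (smul_cancel hCA h5).symm
      refine L3 hHP hNP hAS hsS hCS hBS hs1 hsA hsC ?_
      rw [det2_swap]
      rw [← heABd]
      intro h
      have : det2 eAB (C - A) = 0 := by linarith
      linarith
  · -- Cross A D B C
    obtain ⟨s, hsS, hs1, hs2⟩ := hbr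
    obtain ⟨t1, ht10, ht11, hsr1⟩ := seg_dest hs1
    obtain ⟨t2, ht20, ht21, hsr2⟩ := seg_dest hs2
    have h1 : det2 eAB (s - A) = t1 * det2 eAB (D - A) := by
      have h00 := det2_affine eAB A A D t1
      rw [← hsr1] at h00
      rw [h00, hgA]; ring
    have h2 : det2 eAB (s - A) = t2 * det2 eAB (C - A) := by
      have h00 := det2_affine eAB A B C t2
      rw [← hsr2] at h00
      rw [h00, hgB]; ring
    have ht2ne : t2 ≠ 0 := by
      intro h
      rw [h, zero_mul] at h2
      have ht1' : t1 = 0 := by nlinarith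
      apply hAB
      have hsA : s = A := by rw [hsr1, ht1', zero_smul, add_zero]
      have hsB : s = B := by rw [hsr2, h, zero_smul, add_zero]
      rw [← hsA, ← hsB]
    have ht1ne : t1 ≠ 0 := by
      intro h
      rw [h, zero_mul] at h1
      have h3 : t2 * det2 eAB (C - A) = 0 := by linarith
      rcases mul_eq_zero.mp h3 with h' | h'
      · exact ht2ne h'
      · linarith
    have hsA : s ≠ A := by
      intro h
      rw [h, det2_zero_sub] at h1
      have h3 : t1 = 0 := by
        rcases mul_eq_zero.mp h1.symm with h' | h'
        · exact h'
        · exfalso; linarith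
      exact ht1ne h3
    rcases eq_or_ne t1 1 with ht1e | ht1e
    · -- s = D ∈ [B,C] : L3 (B, D, C, A)
      have hsD : s = D := by rw [hsr1, ht1e, one_smul]; module
      rw [hsD] at hs2
      refine L3 hHP hNP hBS hDS hCS hAS hs2 hDB (Ne.symm hCD) ?_
      have hcyc : det2 (C - B) (A - B) = det2 eAB (C - A) := by
        rw [heABd, ← det2_cycle A B C]
      rw [hcyc]
      linarith
    · -- generic : s strictly inside [A,D] : L3 (A, s, D, B)
      have hsD : s ≠ D := by
        intro h
        apply ht1e
        rw [h] at hsr1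
        have h5 : (1 : ℝ) • (D - A) = t1 • (D - A) := by
          rw [one_smul]
          have h6 : D - A = A + t1 • (D - A) - A := by rw [← hsr1]
          rw [show A + t1 • (D - A) - A = t1 • (D - A) by module] at h6
          exact h6
        exact (smul_cancel hDA h5).symm
      refine L3 hHP hNP hAS hsS hDS hBS hs1 hsA hsD ?_
      rw [det2_swap]
      rw [← heABd]
      intro h
      have : det2 eAB (D - A) = 0 := by linarith
      linarith
  · -- Inc A B C D : s ∈ [C,D], A ∈ [B,s] : killed
    obtain ⟨⟨s, hsS, hs1, hs2⟩, -, -⟩ := hbr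
    obtain ⟨t2, ht20, ht21, hsr2⟩ := seg_dest hs1
    obtain ⟨t, ht0, ht1, hAr⟩ := seg_dest hs2
    have hgs : det2 eAB (s - A) = (1 - t2) * det2 eAB (C - A) + t2 * det2 eAB (D - A) := by
      have h00 := det2_affine eAB A C D t2
      rw [← hsr2] at h00
      exact h00
    have hgspos : 0 < det2 eAB (s - A) := by
      rw [hgs]; exact combo_pos hC hD ht20 ht21
    have h00 := det2_affine eAB A B s t
    rw [← hAr] at h00
    rw [hgA, hgB] at h00
    rcases mul_eq_zero.mp (by linarith : t * det2 eAB (s - A) = 0) with ht' | hgs'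
    · exfalso; apply hAB
      rw [hAr, ht', zero_smul, add_zero]
    · exfalso; rw [hgs'] at hgspos; linarith
  · -- Inc B A C D : s ∈ [C,D], B ∈ [A,s] : killed
    obtain ⟨⟨s, hsS, hs1, hs2⟩, -, -⟩ := hbr
    obtain ⟨t2, ht20, ht21, hsr2⟩ := seg_dest hs1
    obtain ⟨t, ht0, ht1, hBr⟩ := seg_dest hs2
    have hgs : det2 eAB (s - A) = (1 - t2) * det2 eAB (C - A) + t2 * det2 eAB (D - A) := by
      have h00 := det2_affine eAB A C D t2
      rw [← hsr2] at h00
      exact h00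
    have hgspos : 0 < det2 eAB (s - A) := by
      rw [hgs]; exact combo_pos hC hD ht20 ht21
    have h00 := det2_affine eAB A A s t
    rw [← hBr] at h00
    rw [hgA, hgB] at h00
    rcases mul_eq_zero.mp (by linarith : t * det2 eAB (s - A) = 0) with ht' | hgs'
    · exfalso; apply hAB
      rw [hBr, ht', zero_smul, add_zero]
    · exfalso; rw [hgs'] at hgspos; linarith
  · -- Inc C A B D : s ∈ [A,B], C ∈ [D,s] : L3 (D, C, s, _)
    obtain ⟨-, -, ⟨s, hsS, hs1, hs2⟩⟩ := hbr
    obtain ⟨t1, ht10, ht11, hsr1⟩ := seg_dest hs1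
    have hgs : det2 eAB (s - A) = 0 := by
      have h00 := det2_affine eAB A A B t1
      rw [← hsr1] at h00
      rw [h00, hgA, hgB]; ring
    have hsD : s ≠ D := by
      intro h; rw [h] at hgs; linarith
    have hsDne : s - D ≠ 0 := sub_ne_zero.mpr hsD
    have hCs : C ≠ s := by
      intro h; rw [← h] at hgs; linarith
    have hkey : ¬ (det2 (s - D) (A - D) = 0 ∧ det2 (s - D) (B - D) = 0) := by
      rintro ⟨h0, h0'⟩
      obtain ⟨k1, hk1⟩ := rep_of_det2 hsDne h0
      obtain ⟨k2, hk2⟩ := rep_of_det2 hsDne h0'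
      have h5 : det2 eAB (D - A) = 0 := by
        rw [heABd, show B - A = (k2 - k1) • (s - D) by rw [hk1, hk2]; module,
          det2_smul_left, show D - A = (-k1) • (s - D) by rw [hk1]; module,
          det2_smul_right, det2_self]
        ring
      linarith
    rcases eq_or_ne (det2 (s - D) (A - D)) 0 with h0 | h0
    · have h0' : det2 (s - D) (B - D) ≠ 0 := by
        intro h'
        exact hkey ⟨h0, h'⟩
      exact L3 hHP hNP hDS hCS hsS hBS hs2 hCD hCs h0'
    · exact L3 hHP hNP hDS hCS hsS hAS hs2 hCD hCs h0
  · -- Inc D A B C : s ∈ [A,B], D ∈ [C,s] : L3 (C, D, s, _)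
    obtain ⟨-, -, ⟨s, hsS, hs1, hs2⟩⟩ := hbr
    obtain ⟨t1, ht10, ht11, hsr1⟩ := seg_dest hs1
    have hgs : det2 eAB (s - A) = 0 := by
      have h00 := det2_affine eAB A A B t1
      rw [← hsr1] at h00
      rw [h00, hgA, hgB]; ring
    have hsC : s ≠ C := by
      intro h; rw [h] at hgs; linarith
    have hsCne : s - C ≠ 0 := sub_ne_zero.mpr hsC
    have hDs : D ≠ s := by
      intro h; rw [← h] at hgs; linarith
    have hkey : ¬ (det2 (s - C) (A - C) = 0 ∧ det2 (s - C) (B - C) = 0) := by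
      rintro ⟨h0, h0'⟩
      obtain ⟨k1, hk1⟩ := rep_of_det2 hsCne h0
      obtain ⟨k2, hk2⟩ := rep_of_det2 hsCne h0'
      have h5 : det2 eAB (C - A) = 0 := by
        rw [heABd, show B - A = (k2 - k1) • (s - C) by rw [hk1, hk2]; module,
          det2_smul_left, show C - A = (-k1) • (s - C) by rw [hk1]; module,
          det2_smul_right, det2_self]
        ring
      linarith
    rcases eq_or_ne (det2 (s - C) (A - C)) 0 with h0 | h0
    · have h0' : det2 (s - C) (B - C) ≠ 0 := by
        intro h'
        exact hkey ⟨h0, h'⟩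
      exact L3 hHP hNP hCS hDS hsS hBS hs2 (Ne.symm hCD) hDs h0'
    · exact L3 hHP hNP hCS hDS hsS hAS hs2 (Ne.symm hCD) hDs h0

lemma det2_flip_base (A B z : ℝ × ℝ) : det2 (A - B) (z - B) = - det2 (B - A) (z - A) := by
  simp only [det2, Prod.fst_sub, Prod.snd_sub]; ring

set_option maxHeartbeats 800000 in
lemma master {S : Set (ℝ × ℝ)} (hHP : HP S) (hNP : NP S) : Good S := by
  have h10 : ((1:ℝ), (0:ℝ)) ≠ (0 : ℝ × ℝ) := by
    intro h
    have := congrArg Prod.fst h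
    simp at this
  obtain ⟨A, hAS, -, -⟩ := hNP 0 (1, 0) h10 0
  obtain ⟨B, hBS, hBl, -⟩ := hNP A (1, 0) h10 A
  have hAB : A ≠ B := by
    intro h
    exact hBl 0 (by rw [← h, zero_smul, add_zero])
  have he : B - A ≠ 0 := sub_ne_zero.mpr (Ne.symm hAB)
  obtain ⟨C, hCS, hCl, -⟩ := hNP A (B - A) he A
  obtain ⟨D, hDS, hDl, hDC⟩ := hNP A (B - A) he C
  have hgC : det2 (B - A) (C - A) ≠ 0 := by
    intro h0
    obtain ⟨t, ht⟩ := rep_of_det2 he h0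
    exact hCl t ht
  have hgD : det2 (B - A) (D - A) ≠ 0 := by
    intro h0
    obtain ⟨t, ht⟩ := rep_of_det2 he h0
    exact hDl t ht
  rcases lt_or_gt_of_ne hgC with hC | hC <;> rcases lt_or_gt_of_ne hgD with hD | hD
  · -- both negative : LII with A,B swapped
    have hC' : 0 < det2 (A - B) (C - B) := by rw [det2_flip_base]; linarith
    have hD' : 0 < det2 (A - B) (D - B) := by rw [det2_flip_base]; linarith
    exact LII hHP hNP hBS hAS hCS hDS (Ne.symm hAB) (Ne.symm hDC) hC' hD'
  · -- C neg, D pos : LI with C,D swapped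
    exact LI hHP hNP hAS hBS hDS hCS hAB hD hC
  · -- C pos, D neg
    exact LI hHP hNP hAS hBS hCS hDS hAB hC hD
  · -- both positive
    exact LII hHP hNP hAS hBS hCS hDS hAB (Ne.symm hDC) hC hD

set_option maxHeartbeats 1600000 in
lemma radon4 (a b c d : ℝ × ℝ) :
    (∃ z, z ∈ segment ℝ a b ∧ z ∈ segment ℝ c d) ∨
    (∃ z, z ∈ segment ℝ a c ∧ z ∈ segment ℝ b d) ∨
    (∃ z, z ∈ segment ℝ a d ∧ z ∈ segment ℝ b c) ∨
    a ∈ convexHull ℝ {b, c, d} ∨ b ∈ convexHull ℝ {a, c, d} ∨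
    c ∈ convexHull ℝ {a, b, d} ∨ d ∈ convexHull ℝ {a, b, c} := by
  set v : Fin 4 → ℝ × ℝ := ![a, b, c, d] with hv
  have hnd : ¬ AffineIndependent ℝ v := by
    intro h
    have hc := h.card_le_finrank_succ
    have h2 : Module.finrank ℝ ↥(vectorSpan ℝ (Set.range v)) ≤ Module.finrank ℝ (ℝ × ℝ) :=
      Submodule.finrank_le _
    have h3 : Module.finrank ℝ (ℝ × ℝ) = 2 := by
      rw [Module.finrank_prod, Module.finrank_self]
    rw [Fintype.card_fin] at hc
    omega
  obtain ⟨I, z, hz1, hz2⟩ := Convex.radon_partition hnd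
  have hva : v 0 = a := rfl
  have hvb : v 1 = b := rfl
  have hvc : v 2 = c := rfl
  have hvd : v 3 = d := rfl
  by_cases h0 : (0 : Fin 4) ∈ I <;> by_cases h1 : (1 : Fin 4) ∈ I <;>
    by_cases h2 : (2 : Fin 4) ∈ I <;> by_cases h3 : (3 : Fin 4) ∈ I
  · -- univ : contradiction via Iᶜ = ∅
    exfalso
    have hIc : Iᶜ = (∅ : Set (Fin 4)) := by
      ext i; fin_cases i <;> simp [h0, h1, h2, h3]
    rw [hIc, Set.image_empty, convexHull_empty] at hz2
    exact hz2
  · -- I = {0,1,2}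
    have hIc : Iᶜ = ({3} : Set (Fin 4)) := by
      ext i; fin_cases i <;> simp [h0, h1, h2, h3]
    have hIeq : I = ({0, 1, 2} : Set (Fin 4)) := by
      ext i; fin_cases i <;> simp [h0, h1, h2, h3]
    rw [hIc, Set.image_singleton, convexHull_singleton, Set.mem_singleton_iff] at hz2
    rw [hIeq, Set.image_insert_eq, Set.image_insert_eq, Set.image_singleton, hva, hvb, hvc] at hz1
    rw [hz2, hvd] at hz1
    exact Or.inr (Or.inr (Or.inr (Or.inr (Or.inr (Or.inr hz1)))))
  · -- I = {0,1,3}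
    have hIc : Iᶜ = ({2} : Set (Fin 4)) := by
      ext i; fin_cases i <;> simp [h0, h1, h2, h3]
    have hIeq : I = ({0, 1, 3} : Set (Fin 4)) := by
      ext i; fin_cases i <;> simp [h0, h1, h2, h3]
    rw [hIc, Set.image_singleton, convexHull_singleton, Set.mem_singleton_iff] at hz2
    rw [hIeq, Set.image_insert_eq, Set.image_insert_eq, Set.image_singleton, hva, hvb, hvd] at hz1
    rw [hz2, hvc] at hz1
    exact Or.inr (Or.inr (Or.inr (Or.inr (Or.inr (Or.inl hz1)))))
  · -- I = {0,1}
    have hIeq : I = ({0, 1} : Set (Fin 4)) := by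
      ext i; fin_cases i <;> simp [h0, h1, h2, h3]
    have hIc : Iᶜ = ({2, 3} : Set (Fin 4)) := by
      ext i; fin_cases i <;> simp [h0, h1, h2, h3]
    rw [hIeq, Set.image_insert_eq, Set.image_singleton, hva, hvb, convexHull_pair] at hz1
    rw [hIc, Set.image_insert_eq, Set.image_singleton, hvc, hvd, convexHull_pair] at hz2
    exact Or.inl ⟨z, hz1, hz2⟩
  · -- I = {0,2,3}
    have hIc : Iᶜ = ({1} : Set (Fin 4)) := by
      ext i; fin_cases i <;> simp [h0, h1, h2, h3]
    have hIeq : I = ({0, 2, 3} : Set (Fin 4)) := by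
      ext i; fin_cases i <;> simp [h0, h1, h2, h3]
    rw [hIc, Set.image_singleton, convexHull_singleton, Set.mem_singleton_iff] at hz2
    rw [hIeq, Set.image_insert_eq, Set.image_insert_eq, Set.image_singleton, hva, hvc, hvd] at hz1
    rw [hz2, hvb] at hz1
    exact Or.inr (Or.inr (Or.inr (Or.inr (Or.inl hz1))))
  · -- I = {0,2}
    have hIeq : I = ({0, 2} : Set (Fin 4)) := by
      ext i; fin_cases i <;> simp [h0, h1, h2, h3]
    have hIc : Iᶜ = ({1, 3} : Set (Fin 4)) := by
      ext i; fin_cases i <;> simp [h0, h1, h2, h3]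
    rw [hIeq, Set.image_insert_eq, Set.image_singleton, hva, hvc, convexHull_pair] at hz1
    rw [hIc, Set.image_insert_eq, Set.image_singleton, hvb, hvd, convexHull_pair] at hz2
    exact Or.inr (Or.inl ⟨z, hz1, hz2⟩)
  · -- I = {0,3}
    have hIeq : I = ({0, 3} : Set (Fin 4)) := by
      ext i; fin_cases i <;> simp [h0, h1, h2, h3]
    have hIc : Iᶜ = ({1, 2} : Set (Fin 4)) := by
      ext i; fin_cases i <;> simp [h0, h1, h2, h3]
    rw [hIeq, Set.image_insert_eq, Set.image_singleton, hva, hvd, convexHull_pair] at hz1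
    rw [hIc, Set.image_insert_eq, Set.image_singleton, hvb, hvc, convexHull_pair] at hz2
    exact Or.inr (Or.inr (Or.inl ⟨z, hz1, hz2⟩))
  · -- I = {0}
    have hIeq : I = ({0} : Set (Fin 4)) := by
      ext i; fin_cases i <;> simp [h0, h1, h2, h3]
    have hIc : Iᶜ = ({1, 2, 3} : Set (Fin 4)) := by
      ext i; fin_cases i <;> simp [h0, h1, h2, h3]
    rw [hIeq, Set.image_singleton, convexHull_singleton, Set.mem_singleton_iff] at hz1
    rw [hIc, Set.image_insert_eq, Set.image_insert_eq, Set.image_singleton, hvb, hvc, hvd] at hz2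
    rw [hz1, hva] at hz2
    exact Or.inr (Or.inr (Or.inr (Or.inl hz2)))
  · -- I = {1,2,3}
    have hIc : Iᶜ = ({0} : Set (Fin 4)) := by
      ext i; fin_cases i <;> simp [h0, h1, h2, h3]
    have hIeq : I = ({1, 2, 3} : Set (Fin 4)) := by
      ext i; fin_cases i <;> simp [h0, h1, h2, h3]
    rw [hIc, Set.image_singleton, convexHull_singleton, Set.mem_singleton_iff] at hz2
    rw [hIeq, Set.image_insert_eq, Set.image_insert_eq, Set.image_singleton, hvb, hvc, hvd] at hz1
    rw [hz2, hva] at hz1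
    exact Or.inr (Or.inr (Or.inr (Or.inl hz1)))
  · -- I = {1,2}
    have hIeq : I = ({1, 2} : Set (Fin 4)) := by
      ext i; fin_cases i <;> simp [h0, h1, h2, h3]
    have hIc : Iᶜ = ({0, 3} : Set (Fin 4)) := by
      ext i; fin_cases i <;> simp [h0, h1, h2, h3]
    rw [hIeq, Set.image_insert_eq, Set.image_singleton, hvb, hvc, convexHull_pair] at hz1
    rw [hIc, Set.image_insert_eq, Set.image_singleton, hva, hvd, convexHull_pair] at hz2
    exact Or.inr (Or.inr (Or.inl ⟨z, hz2, hz1⟩))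
  · -- I = {1,3}
    have hIeq : I = ({1, 3} : Set (Fin 4)) := by
      ext i; fin_cases i <;> simp [h0, h1, h2, h3]
    have hIc : Iᶜ = ({0, 2} : Set (Fin 4)) := by
      ext i; fin_cases i <;> simp [h0, h1, h2, h3]
    rw [hIeq, Set.image_insert_eq, Set.image_singleton, hvb, hvd, convexHull_pair] at hz1
    rw [hIc, Set.image_insert_eq, Set.image_singleton, hva, hvc, convexHull_pair] at hz2
    exact Or.inr (Or.inl ⟨z, hz2, hz1⟩)
  · -- I = {1}
    have hIeq : I = ({1} : Set (Fin 4)) := by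
      ext i; fin_cases i <;> simp [h0, h1, h2, h3]
    have hIc : Iᶜ = ({0, 2, 3} : Set (Fin 4)) := by
      ext i; fin_cases i <;> simp [h0, h1, h2, h3]
    rw [hIeq, Set.image_singleton, convexHull_singleton, Set.mem_singleton_iff] at hz1
    rw [hIc, Set.image_insert_eq, Set.image_insert_eq, Set.image_singleton, hva, hvc, hvd] at hz2
    rw [hz1, hvb] at hz2
    exact Or.inr (Or.inr (Or.inr (Or.inr (Or.inl hz2))))
  · -- I = {2,3}
    have hIeq : I = ({2, 3} : Set (Fin 4)) := by
      ext i; fin_cases i <;> simp [h0, h1, h2, h3]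
    have hIc : Iᶜ = ({0, 1} : Set (Fin 4)) := by
      ext i; fin_cases i <;> simp [h0, h1, h2, h3]
    rw [hIeq, Set.image_insert_eq, Set.image_singleton, hvc, hvd, convexHull_pair] at hz1
    rw [hIc, Set.image_insert_eq, Set.image_singleton, hva, hvb, convexHull_pair] at hz2
    exact Or.inl ⟨z, hz2, hz1⟩
  · -- I = {2}
    have hIeq : I = ({2} : Set (Fin 4)) := by
      ext i; fin_cases i <;> simp [h0, h1, h2, h3]
    have hIc : Iᶜ = ({0, 1, 3} : Set (Fin 4)) := by
      ext i; fin_cases i <;> simp [h0, h1, h2, h3]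
    rw [hIeq, Set.image_singleton, convexHull_singleton, Set.mem_singleton_iff] at hz1
    rw [hIc, Set.image_insert_eq, Set.image_insert_eq, Set.image_singleton, hva, hvb, hvd] at hz2
    rw [hz1, hvc] at hz2
    exact Or.inr (Or.inr (Or.inr (Or.inr (Or.inr (Or.inl hz2)))))
  · -- I = {3}
    have hIeq : I = ({3} : Set (Fin 4)) := by
      ext i; fin_cases i <;> simp [h0, h1, h2, h3]
    have hIc : Iᶜ = ({0, 1, 2} : Set (Fin 4)) := by
      ext i; fin_cases i <;> simp [h0, h1, h2, h3]
    rw [hIeq, Set.image_singleton, convexHull_singleton, Set.mem_singleton_iff] at hz1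
    rw [hIc, Set.image_insert_eq, Set.image_insert_eq, Set.image_singleton, hva, hvb, hvc] at hz2
    rw [hz1, hvd] at hz2
    exact Or.inr (Or.inr (Or.inr (Or.inr (Or.inr (Or.inr hz2)))))
  · -- I = ∅ : contradiction
    exfalso
    have hIeq : I = (∅ : Set (Fin 4)) := by
      ext i; fin_cases i <;> simp [h0, h1, h2, h3]
    rw [hIeq, Set.image_empty, convexHull_empty] at hz1
    exact hz1

set_option maxHeartbeats 800000 in
lemma HP_of_mono {G : Set (ℝ × ℝ)} (hG : Convex ℝ G) (f : ℝ × ℝ → ℝ × ℝ)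
    (hmono : ∀ p q x, p ∈ G → q ∈ G → x ∈ G → x ∈ segment ℝ p q →
      f x ∈ segment ℝ (f p) (f q)) :
    HP (f '' G) := by
  have hInc : ∀ p q r s : ℝ × ℝ, p ∈ G → q ∈ G → r ∈ G → s ∈ G →
      p ∈ convexHull ℝ {q, r, s} → Inc (f '' G) (f p) (f q) (f r) (f s) := by
    intro p q r s hp hq hr hs hmem
    refine ⟨?_, ?_, ?_⟩
    · obtain ⟨y, hy, hpy⟩ := hull3 hmem
      have hyG : y ∈ G := hG.segment_subset hr hs hy
      exact ⟨f y, ⟨y, hyG, rfl⟩, hmono r s y hr hs hyG hy, hmono q y p hq hyG hp hpy⟩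
    · have hmem2 : p ∈ convexHull ℝ {r, q, s} := by
        rw [show ({r, q, s} : Set (ℝ × ℝ)) = {q, r, s} by ext x; simp; tauto]
        exact hmem
      obtain ⟨y, hy, hpy⟩ := hull3 hmem2
      have hyG : y ∈ G := hG.segment_subset hq hs hy
      exact ⟨f y, ⟨y, hyG, rfl⟩, hmono q s y hq hs hyG hy, hmono r y p hr hyG hp hpy⟩
    · have hmem2 : p ∈ convexHull ℝ {s, q, r} := by
        rw [show ({s, q, r} : Set (ℝ × ℝ)) = {q, r, s} by ext x; simp; tauto]
        exact hmem
      obtain ⟨y, hy, hpy⟩ := hull3 hmem2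
      have hyG : y ∈ G := hG.segment_subset hq hr hy
      exact ⟨f y, ⟨y, hyG, rfl⟩, hmono q r y hq hr hyG hy, hmono s y p hs hyG hp hpy⟩
  intro A B C D hA hB hC hD
  obtain ⟨a, haG, rfl⟩ := hA
  obtain ⟨b, hbG, rfl⟩ := hB
  obtain ⟨c, hcG, rfl⟩ := hC
  obtain ⟨d, hdG, rfl⟩ := hD
  rcases radon4 a b c d with ⟨z, hz1, hz2⟩ | ⟨z, hz1, hz2⟩ | ⟨z, hz1, hz2⟩ | h | h | h | h
  · left
    have hzG : z ∈ G := hG.segment_subset haG hbG hz1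
    exact ⟨f z, ⟨z, hzG, rfl⟩, hmono a b z haG hbG hzG hz1, hmono c d z hcG hdG hzG hz2⟩
  · right; left
    have hzG : z ∈ G := hG.segment_subset haG hcG hz1
    exact ⟨f z, ⟨z, hzG, rfl⟩, hmono a c z haG hcG hzG hz1, hmono b d z hbG hdG hzG hz2⟩
  · right; right; left
    have hzG : z ∈ G := hG.segment_subset haG hdG hz1
    exact ⟨f z, ⟨z, hzG, rfl⟩, hmono a d z haG hdG hzG hz1, hmono b c z hbG hcG hzG hz2⟩
  · exact Or.inr (Or.inr (Or.inr (Or.inl (hInc a b c d haG hbG hcG hdG h))))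
  · exact Or.inr (Or.inr (Or.inr (Or.inr (Or.inl (hInc b a c d hbG haG hcG hdG h)))))
  · exact Or.inr (Or.inr (Or.inr (Or.inr (Or.inr (Or.inl (hInc c a b d hcG haG hbG hdG h))))))
  · exact Or.inr (Or.inr (Or.inr (Or.inr (Or.inr (Or.inr (hInc d a b c hdG haG hbG hcG h))))))

end S11

/-- If the image of a monotone map on a convex planar set is not contained
in a line plus one point and has empty interior, then it contains four convex
independent points. -/
theorem stmt_11 (G : Set (ℝ × ℝ)) (hG : Convex ℝ G) (f : ℝ × ℝ → ℝ × ℝ)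
    (hmono : ∀ p q x, p ∈ G → q ∈ G → x ∈ G → x ∈ segment ℝ p q →
      f x ∈ segment ℝ (f p) (f q))
    (hnotline : ¬ ∃ (p w q : ℝ × ℝ), w ≠ 0 ∧ f '' G ⊆ lineThrough p w ∪ {q})
    (hint : interior (f '' G) = ∅) :
    ∃ a b c d : ℝ × ℝ, a ∈ f '' G ∧ b ∈ f '' G ∧ c ∈ f '' G ∧ d ∈ f '' G ∧
      ({a, b, c, d} : Set (ℝ × ℝ)).ncard = 4 ∧ ConvexIndep {a, b, c, d} := by
  have hHP : S11.HP (f '' G) := S11.HP_of_mono hG f hmono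
  have hNP : S11.NP (f '' G) := by
    intro p w hw q
    by_contra hcon
    push_neg at hcon
    apply hnotline
    refine ⟨p, w, q, hw, ?_⟩
    intro x hx
    by_cases hline : ∃ t : ℝ, x = p + t • w
    · exact Or.inl hline
    · push_neg at hline
      exact Or.inr (hcon x hx hline)
  exact S11.master hHP hNP
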